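/- arXiv:2503.10862 — 2 statements merged into one kernel-verified Lean document; each statement's English description precedes it below -/
import Mathlib

section
/- Every face of ASM_n is a 2-level polytope: for each facet-defining hyperplane H of a face F there is a parallel hyperplane H' containing all vertices of F not in H. -/
open scoped BigOperators
open scoped Classical

namespace ASMPaper

variable {n : ℕ}

/-- Partial row sum `W_{ij} = ∑_{j' ≤ j} a_{i j'}`. -/
def rowPartial (A : Matrix (Fin n) (Fin n) ℝ) (i j : Fin n) : ℝ :=
  ∑ j' ∈ Finset.univ.filter (fun j' : Fin n => j' ≤ j), A i j'

/-- Partial column sum `N_{ij} = ∑_{i' ≤ i} a_{i' j}`. -/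
def colPartial (A : Matrix (Fin n) (Fin n) ℝ) (i j : Fin n) : ℝ :=
  ∑ i' ∈ Finset.univ.filter (fun i' : Fin n => i' ≤ i), A i' j

/-- An alternating sign matrix: entries in {0,1,-1}, rows and columns sum to 1,
nonzero entries alternating in sign along rows and columns (equivalently, all
partial row and column sums lie in {0,1}). -/
def IsASM (A : Matrix (Fin n) (Fin n) ℝ) : Prop :=
  (∀ i j, A i j = 0 ∨ A i j = 1 ∨ A i j = -1) ∧
  (∀ i j, rowPartial A i j = 0 ∨ rowPartial A i j = 1) ∧
  (∀ i j, colPartial A i j = 0 ∨ colPartial A i j = 1) ∧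
  (∀ i, ∑ j, A i j = 1) ∧
  (∀ j, ∑ i, A i j = 1)

/-- The ASM polytope: convex hull of the `n × n` alternating sign matrices. -/
def ASMPolytope (n : ℕ) : Set (Matrix (Fin n) (Fin n) ℝ) :=
  convexHull ℝ {A : Matrix (Fin n) (Fin n) ℝ | IsASM A}

/-- A face of a convex set: a convex extreme subset. -/
def IsFaceOf (F P : Set (Matrix (Fin n) (Fin n) ℝ)) : Prop :=
  IsExtreme ℝ P F ∧ Convex ℝ F

/-- A facet: a nonempty face of dimension one less. -/
def IsFacetOf (G F : Set (Matrix (Fin n) (Fin n) ℝ)) : Prop :=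
  IsFaceOf G F ∧ G.Nonempty ∧
    Module.finrank ℝ (vectorSpan ℝ G) + 1 = Module.finrank ℝ (vectorSpan ℝ F)

/-- The ASMs (vertices) belonging to a face `F`. -/
def faceASMs (F : Set (Matrix (Fin n) (Fin n) ℝ)) : Set (Matrix (Fin n) (Fin n) ℝ) :=
  {A | A ∈ F ∧ IsASM A}

/-- `A` and `B` are estranged in `F` if no proper face of `F` contains both. -/
def Estranged (F : Set (Matrix (Fin n) (Fin n) ℝ)) (A B : Matrix (Fin n) (Fin n) ℝ) : Prop :=
  ∀ F', IsFaceOf F' F → F' ≠ F → ¬(A ∈ F' ∧ B ∈ F')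

/-- The doubly directed graph of a set `X` of ASMs: grid vertices `(i,j)`, with an
(undirected) edge between orthogonally adjacent grid vertices whenever the
corresponding grid edge receives both orientations among the simple flow grids of
members of `X` (the orientation of a grid edge in the simple flow grid of `A` is
determined by the relevant partial sum of `A`). -/
def ddGraph (X : Set (Matrix (Fin n) (Fin n) ℝ)) : SimpleGraph (Fin n × Fin n) where
  Adj v w :=
    (v.1 = w.1 ∧ ((v.2 : ℕ) + 1 = (w.2 : ℕ) ∨ (w.2 : ℕ) + 1 = (v.2 : ℕ)) ∧
      ∃ A ∈ X, ∃ B ∈ X, rowPartial A v.1 (min v.2 w.2) ≠ rowPartial B v.1 (min v.2 w.2)) ∨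
    (v.2 = w.2 ∧ ((v.1 : ℕ) + 1 = (w.1 : ℕ) ∨ (w.1 : ℕ) + 1 = (v.1 : ℕ)) ∧
      ∃ A ∈ X, ∃ B ∈ X, colPartial A (min v.1 w.1) v.2 ≠ colPartial B (min v.1 w.1) v.2)
  symm := by
    constructor
    rintro v w (⟨h1, h2, h3⟩ | ⟨h1, h2, h3⟩)
    · exact Or.inl ⟨h1.symm, h2.symm, by rw [min_comm, ← h1]; exact h3⟩
    · exact Or.inr ⟨h1.symm, h2.symm, by rw [min_comm, ← h1]; exact h3⟩
  loopless := by
    constructor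
    rintro v (⟨-, h2, -⟩ | ⟨-, h2, -⟩) <;> rcases h2 with h | h <;> omega

/-- Degree of a grid vertex in the doubly directed graph. -/
noncomputable def ddDegree (X : Set (Matrix (Fin n) (Fin n) ℝ)) (v : Fin n × Fin n) : ℕ :=
  ((ddGraph X).neighborSet v).ncard

/-- The (non-isolated) vertices of the doubly directed graph. -/
def ddSupport (X : Set (Matrix (Fin n) (Fin n) ℝ)) : Set (Fin n × Fin n) :=
  {v | ∃ w, (ddGraph X).Adj v w}

/-- The doubly directed graph is connected (on its support). -/
def DDConnected (X : Set (Matrix (Fin n) (Fin n) ℝ)) : Prop :=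
  ∀ v ∈ ddSupport X, ∀ w ∈ ddSupport X, (ddGraph X).Reachable v w


/-! ### Auxiliary development for Statement 12 -/

section Aux

variable {n : ℕ}

local notation "Mat" => Matrix (Fin n) (Fin n) ℝ

/-- `ℕ`-indexed strict partial sums of a `Fin n`-indexed family. -/
def psum (f : Fin n → ℝ) (t : ℕ) : ℝ :=
  ∑ s ∈ Finset.range t, (if hs : s < n then f ⟨s, hs⟩ else 0)

lemma psum_zero (f : Fin n → ℝ) : psum f 0 = 0 := by simp [psum]

lemma psum_succ (f : Fin n → ℝ) (t : ℕ) :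
    psum f (t + 1) = psum f t + (if hs : t < n then f ⟨t, hs⟩ else 0) := by
  simp [psum, Finset.sum_range_succ]

lemma sum_filter_le_eq (h : Fin n → ℝ) (j : Fin n) :
    ∑ j' ∈ Finset.univ.filter (fun j' : Fin n => j' ≤ j), h j'
      = ∑ s ∈ Finset.range ((j : ℕ) + 1), (if hs : s < n then h ⟨s, hs⟩ else 0) := by
  refine Finset.sum_nbij' (fun j' => (j' : ℕ)) (fun s => if hs : s < n then ⟨s, hs⟩ else j)
    ?_ ?_ ?_ ?_ ?_
  · intro a ha
    simp only [Finset.mem_filter, Finset.mem_univ, true_and] at ha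
    simp only [Finset.mem_range]
    omega
  · intro s hs
    simp only [Finset.mem_range] at hs
    have hsn : s < n := lt_of_lt_of_le hs (Nat.succ_le_of_lt j.isLt)
    simp only [dif_pos hsn, Finset.mem_filter, Finset.mem_univ, true_and]
    rw [Fin.le_def]
    simp only []
    omega
  · intro a ha
    simp only [Finset.mem_filter, Finset.mem_univ, true_and] at ha
    simp [a.isLt]
  · intro s hs
    simp only [Finset.mem_range] at hs
    have hsn : s < n := lt_of_lt_of_le hs (Nat.succ_le_of_lt j.isLt)
    simp [hsn]
  · intro a ha
    simp only [Finset.mem_filter, Finset.mem_univ, true_and] at ha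
    simp [a.isLt]

lemma rowPartial_eq_psum (x : Mat) (i j : Fin n) :
    rowPartial x i j = psum (x i) ((j : ℕ) + 1) := by
  rw [rowPartial, psum, sum_filter_le_eq]

lemma colPartial_eq_psum (x : Mat) (i j : Fin n) :
    colPartial x i j = psum (fun i' => x i' j) ((i : ℕ) + 1) := by
  rw [colPartial, psum, sum_filter_le_eq]

lemma psum_of_ge (f : Fin n → ℝ) {t : ℕ} (ht : n ≤ t) : psum f t = ∑ j, f j := by
  have h1 : psum f n = psum f t := by
    refine Finset.sum_subset (Finset.range_subset_range.2 ht) ?_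
    intro s _ hs
    simp only [Finset.mem_range] at hs
    rw [dif_neg]; omega
  rw [← h1, psum, Finset.sum_range fun s => _]
  · apply Finset.sum_congr rfl
    intro s _
    simp

/-- Index type for the defining constraints of the ASM polytope. -/
abbrev Etype (n : ℕ) := (Fin n × Fin n) ⊕ (Fin n × Fin n)

/-- The partial-sum functionals. -/
def fE (e : Etype n) (x : Mat) : ℝ :=
  match e with
  | Sum.inl p => rowPartial x p.1 p.2
  | Sum.inr p => colPartial x p.1 p.2

lemma rowPartial_add (x y : Mat) (i j : Fin n) :
    rowPartial (x + y) i j = rowPartial x i j + rowPartial y i j := by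
  simp [rowPartial, Matrix.add_apply, Finset.sum_add_distrib]

lemma colPartial_add (x y : Mat) (i j : Fin n) :
    colPartial (x + y) i j = colPartial x i j + colPartial y i j := by
  simp [colPartial, Matrix.add_apply, Finset.sum_add_distrib]

lemma rowPartial_smul (a : ℝ) (x : Mat) (i j : Fin n) :
    rowPartial (a • x) i j = a * rowPartial x i j := by
  simp [rowPartial, Matrix.smul_apply, Finset.mul_sum, smul_eq_mul]

lemma colPartial_smul (a : ℝ) (x : Mat) (i j : Fin n) :
    colPartial (a • x) i j = a * colPartial x i j := by
  simp [colPartial, Matrix.smul_apply, Finset.mul_sum, smul_eq_mul]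

lemma fE_add (e : Etype n) (x y : Mat) : fE e (x + y) = fE e x + fE e y := by
  cases e <;> simp [fE, rowPartial_add, colPartial_add]

lemma fE_smul (e : Etype n) (a : ℝ) (x : Mat) : fE e (a • x) = a * fE e x := by
  cases e <;> simp [fE, rowPartial_smul, colPartial_smul]

/-- The bundled linear functional. -/
def fEL (e : Etype n) : Mat →ₗ[ℝ] ℝ where
  toFun := fE e
  map_add' := fE_add e
  map_smul' := fE_smul e

@[simp] lemma fEL_apply (e : Etype n) (x : Mat) : fEL e x = fE e x := rfl

/-- The inequality description of the ASM polytope. -/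
def Qset (n : ℕ) : Set (Matrix (Fin n) (Fin n) ℝ) :=
  {x | (∀ e : Etype n, fE e x ∈ Set.Icc (0:ℝ) 1) ∧
    (∀ i, ∑ j, x i j = 1) ∧ (∀ j, ∑ i, x i j = 1)}

lemma fE_mem_ASM {A : Mat} (hA : IsASM A) (e : Etype n) : fE e A ∈ ({0, 1} : Set ℝ) := by
  cases e with
  | inl p => rcases hA.2.1 p.1 p.2 with h | h <;> simp [fE, h]
  | inr p => rcases hA.2.2.1 p.1 p.2 with h | h <;> simp [fE, h]

lemma convex_Qset : Convex ℝ (Qset n) := by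
  intro x hx y hy a b ha hb hab
  refine ⟨fun e => ?_, fun i => ?_, fun j => ?_⟩
  · have h1 := (hx.1 e).1; have h2 := (hx.1 e).2
    have h3 := (hy.1 e).1; have h4 := (hy.1 e).2
    rw [fE_add, fE_smul, fE_smul]
    constructor
    · positivity
    · nlinarith
  · have h1 := hx.2.1 i; have h2 := hy.2.1 i
    simp only [Matrix.add_apply, Matrix.smul_apply, smul_eq_mul, Finset.sum_add_distrib,
      ← Finset.mul_sum]
    rw [h1, h2]; linarith
  · have h1 := hx.2.2 j; have h2 := hy.2.2 j
    simp only [Matrix.add_apply, Matrix.smul_apply, smul_eq_mul, Finset.sum_add_distrib,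
      ← Finset.mul_sum]
    rw [h1, h2]; linarith

lemma ASM_subset_Qset : {A : Mat | IsASM A} ⊆ Qset n := by
  intro A hA
  refine ⟨fun e => ?_, hA.2.2.2.1, hA.2.2.2.2⟩
  rcases fE_mem_ASM hA e with h | h <;> simp_all

lemma ASMPolytope_subset_Qset : ASMPolytope n ⊆ Qset n :=
  convexHull_min ASM_subset_Qset convex_Qset

/-- matrix entries as differences of `psum`s. -/
lemma entry_eq_psum (x : Mat) (i j : Fin n) :
    x i j = psum (x i) ((j : ℕ) + 1) - psum (x i) (j : ℕ) := by
  rw [psum_succ, dif_pos j.isLt, Fin.eta]; ring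

lemma entry_eq_psum_col (x : Mat) (i j : Fin n) :
    x i j = psum (fun i' => x i' j) ((i : ℕ) + 1) - psum (fun i' => x i' j) (i : ℕ) := by
  rw [psum_succ, dif_pos i.isLt]
  simp only [Fin.eta]
  ring

/-- If all row partial sums vanish, the matrix is zero. -/
lemma eq_zero_of_rowPartial (x : Mat) (h : ∀ i j, rowPartial x i j = 0) : x = 0 := by
  funext i j
  have h1 : ∀ t : ℕ, psum (x i) t = 0 := by
    intro t
    induction t with
    | zero => exact psum_zero _
    | succ t ih =>
      rcases Nat.lt_or_ge t n with ht | ht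
      · have := h i ⟨t, ht⟩
        rw [rowPartial_eq_psum] at this
        exact this
      · rw [psum_succ, dif_neg (by omega), ih, add_zero]
  have := entry_eq_psum x i j
  rw [h1, h1] at this
  simpa using this

/-- full row sum as a rowPartial. -/
lemma sum_eq_rowPartial (x : Mat) (i j : Fin n) (hj : (j : ℕ) + 1 = n) :
    rowPartial x i j = ∑ j', x i j' := by
  rw [rowPartial]
  apply Finset.sum_congr _ (fun _ _ => rfl)
  rw [Finset.filter_true_of_mem]
  intro j' _
  rw [Fin.le_def]
  omega

lemma sum_eq_colPartial (x : Mat) (i j : Fin n) (hi : (i : ℕ) + 1 = n) :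
    colPartial x i j = ∑ i', x i' j := by
  rw [colPartial]
  apply Finset.sum_congr _ (fun _ _ => rfl)
  rw [Finset.filter_true_of_mem]
  intro i' _
  rw [Fin.le_def]
  omega

/-- The set of ASMs is finite. -/
lemma ASM_finite : {A : Mat | IsASM A}.Finite := by
  have h3 : ({0, 1, -1} : Set ℝ).Finite := (Set.finite_singleton _).insert _ |>.insert _
  have hpi : (Set.pi Set.univ fun _ : Fin n =>
      Set.pi Set.univ fun _ : Fin n => ({0, 1, -1} : Set ℝ)).Finite :=
    Set.Finite.pi fun _ => Set.Finite.pi fun _ => h3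
  refine Set.Finite.subset hpi ?_
  intro A hA
  intro i _
  intro j _
  exact hA.1 i j

/-! ### Fractional partial sums and the fractional grid graph -/

lemma mem01 {z : ℝ} : z ∈ ({0, 1} : Set ℝ) ↔ (z = 0 ∨ z = 1) := by
  simp [Set.mem_insert_iff, Set.mem_singleton_iff]

/-- `ℕ`-indexed row partial sums. -/
def Rn (x : Mat) (i t : ℕ) : ℝ :=
  if h : i < n then psum (x ⟨i, h⟩) t else 0

/-- `ℕ`-indexed column partial sums. -/
def Cn (x : Mat) (j t : ℕ) : ℝ :=
  if h : j < n then psum (fun i' => x i' ⟨j, h⟩) t else 0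

def frR (x : Mat) (i t : ℕ) : Prop := Rn x i t ∉ ({0, 1} : Set ℝ)

def frC (x : Mat) (j t : ℕ) : Prop := Cn x j t ∉ ({0, 1} : Set ℝ)

lemma Rn_eq_rowPartial (x : Mat) {i t : ℕ} (hi : i < n) (h1 : 1 ≤ t) (h2 : t ≤ n) :
    Rn x i t = rowPartial x ⟨i, hi⟩ ⟨t - 1, by omega⟩ := by
  rw [Rn, dif_pos hi, rowPartial_eq_psum]
  congr 1
  simp
  omega

lemma Cn_eq_colPartial (x : Mat) {j t : ℕ} (hj : j < n) (h1 : 1 ≤ t) (h2 : t ≤ n) :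
    Cn x j t = colPartial x ⟨t - 1, by omega⟩ ⟨j, hj⟩ := by
  rw [Cn, dif_pos hj, colPartial_eq_psum]
  congr 1
  simp
  omega

lemma Rn_rowPartial (x : Mat) (i j : Fin n) :
    Rn x (i : ℕ) ((j : ℕ) + 1) = rowPartial x i j := by
  rw [Rn, dif_pos i.isLt, rowPartial_eq_psum, Fin.eta]

lemma Cn_colPartial (x : Mat) (i j : Fin n) :
    Cn x (j : ℕ) ((i : ℕ) + 1) = colPartial x i j := by
  rw [Cn, dif_pos j.isLt, colPartial_eq_psum, Fin.eta]

variable {x : Matrix (Fin n) (Fin n) ℝ}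

lemma Rn_mem (hx : x ∈ Qset n) (i t : ℕ) : Rn x i t ∈ Set.Icc (0:ℝ) 1 := by
  rcases Nat.lt_or_ge i n with hi | hi
  · rcases Nat.eq_zero_or_pos t with rfl | ht
    · simp [Rn, psum_zero]
    · rcases le_or_gt t n with h2 | h2
      · rw [Rn_eq_rowPartial x hi ht h2]
        exact hx.1 (Sum.inl (⟨i, hi⟩, ⟨t - 1, by omega⟩))
      · rw [Rn, dif_pos hi, psum_of_ge _ (by omega), hx.2.1 ⟨i, hi⟩]
        norm_num
  · rw [Rn, dif_neg (by omega)]; norm_num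

lemma Cn_mem (hx : x ∈ Qset n) (j t : ℕ) : Cn x j t ∈ Set.Icc (0:ℝ) 1 := by
  rcases Nat.lt_or_ge j n with hj | hj
  · rcases Nat.eq_zero_or_pos t with rfl | ht
    · simp [Cn, psum_zero]
    · rcases le_or_gt t n with h2 | h2
      · rw [Cn_eq_colPartial x hj ht h2]
        exact hx.1 (Sum.inr (⟨t - 1, by omega⟩, ⟨j, hj⟩))
      · rw [Cn, dif_pos hj, psum_of_ge _ (by omega), hx.2.2 ⟨j, hj⟩]
        norm_num
  · rw [Cn, dif_neg (by omega)]; norm_num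

lemma frR_bounds (hx : x ∈ Qset n) {i t : ℕ} (h : frR x i t) : i < n ∧ 1 ≤ t ∧ t < n := by
  have hmem : ¬ (Rn x i t = 0 ∨ Rn x i t = 1) := fun hc => h (mem01.mpr hc)
  have hi : i < n := by
    by_contra hi
    exact hmem (Or.inl (by rw [Rn, dif_neg hi]))
  refine ⟨hi, ?_, ?_⟩
  · by_contra ht
    have ht0 : t = 0 := by omega
    subst ht0
    exact hmem (Or.inl (by rw [Rn, dif_pos hi]; exact psum_zero _))
  · by_contra h2
    exact hmem (Or.inr (by rw [Rn, dif_pos hi, psum_of_ge _ (by omega)]; exact hx.2.1 ⟨i, hi⟩))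

lemma frC_bounds (hx : x ∈ Qset n) {j t : ℕ} (h : frC x j t) : j < n ∧ 1 ≤ t ∧ t < n := by
  have hmem : ¬ (Cn x j t = 0 ∨ Cn x j t = 1) := fun hc => h (mem01.mpr hc)
  have hj : j < n := by
    by_contra hj
    exact hmem (Or.inl (by rw [Cn, dif_neg hj]))
  refine ⟨hj, ?_, ?_⟩
  · by_contra ht
    have ht0 : t = 0 := by omega
    subst ht0
    exact hmem (Or.inl (by rw [Cn, dif_pos hj]; exact psum_zero _))
  · by_contra h2
    exact hmem (Or.inr (by rw [Cn, dif_pos hj, psum_of_ge _ (by omega)]; exact hx.2.2 ⟨j, hj⟩))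

/-- grid conservation law. -/
lemma node_eq (x : Mat) {i j : ℕ} (hi : i < n) (hj : j < n) :
    Rn x i (j + 1) - Rn x i j = Cn x j (i + 1) - Cn x j i := by
  rw [Rn, Rn, Cn, Cn, dif_pos hi, dif_pos hi, dif_pos hj, dif_pos hj]
  rw [← entry_eq_psum x ⟨i, hi⟩ ⟨j, hj⟩, ← entry_eq_psum_col x ⟨i, hi⟩ ⟨j, hj⟩]

lemma frac_help {a b c d : ℝ} (heq : a = b + c - d) (ha : 0 ≤ a) (ha1 : a ≤ 1)
    (hb : b = 0 ∨ b = 1) (hc : c = 0 ∨ c = 1) (hd : d = 0 ∨ d = 1) : a = 0 ∨ a = 1 := by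
  rcases hb with rfl | rfl <;> rcases hc with rfl | rfl <;> rcases hd with rfl | rfl <;> subst heq <;>
    first
      | (norm_num; done)
      | (exfalso; norm_num at ha; done)
      | (exfalso; norm_num at ha1; done)

/-- At each grid node, fractional edges never come alone. -/
lemma parity (hx : x ∈ Qset n) {i j : ℕ} (hi : i < n) (hj : j < n) :
    (frR x i (j+1) → frR x i j ∨ frC x j (i+1) ∨ frC x j i) ∧
    (frR x i j → frR x i (j+1) ∨ frC x j (i+1) ∨ frC x j i) ∧
    (frC x j (i+1) → frR x i (j+1) ∨ frR x i j ∨ frC x j i) ∧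
    (frC x j i → frR x i (j+1) ∨ frR x i j ∨ frC x j (i+1)) := by
  have heq := node_eq x hi hj
  have ha := Rn_mem hx i (j+1)
  have hb := Rn_mem hx i j
  have hc := Cn_mem hx j (i+1)
  have hd := Cn_mem hx j i
  refine ⟨?_, ?_, ?_, ?_⟩ <;> intro h <;> by_contra hno <;> push_neg at hno <;>
      obtain ⟨h1, h2, h3⟩ := hno <;> apply h <;> apply mem01.mpr
  · exact frac_help (by linarith) ha.1 ha.2 (mem01.mp (not_not.mp h1))
      (mem01.mp (not_not.mp h2)) (mem01.mp (not_not.mp h3))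
  · exact frac_help (by linarith) hb.1 hb.2 (mem01.mp (not_not.mp h1))
      (mem01.mp (not_not.mp h3)) (mem01.mp (not_not.mp h2))
  · exact frac_help (by linarith) hc.1 hc.2 (mem01.mp (not_not.mp h3))
      (mem01.mp (not_not.mp h1)) (mem01.mp (not_not.mp h2))
  · exact frac_help (by linarith) hd.1 hd.2 (mem01.mp (not_not.mp h3))
      (mem01.mp (not_not.mp h2)) (mem01.mp (not_not.mp h1))

/-- Adjacency in the fractional grid graph of `x`. -/
def Frac (x : Mat) (v w : ℕ × ℕ) : Prop :=
  (v.1 = w.1 ∧ (v.2 + 1 = w.2 ∨ w.2 + 1 = v.2) ∧ frR x v.1 (max v.2 w.2)) ∨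
  (v.2 = w.2 ∧ (v.1 + 1 = w.1 ∨ w.1 + 1 = v.1) ∧ frC x v.2 (max v.1 w.1))

lemma Frac_symm {v w : ℕ × ℕ} (h : Frac x v w) : Frac x w v := by
  rcases h with ⟨h1, h2, h3⟩ | ⟨h1, h2, h3⟩
  · exact Or.inl ⟨h1.symm, h2.symm, by rwa [max_comm, ← h1]⟩
  · exact Or.inr ⟨h1.symm, h2.symm, by rwa [max_comm, ← h1]⟩

lemma Frac_ne {v w : ℕ × ℕ} (h : Frac x v w) : v ≠ w := by
  rcases h with ⟨_, h2, _⟩ | ⟨_, h2, _⟩ <;> (intro he; rw [he] at h2; omega)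

lemma Frac_lt (hx : x ∈ Qset n) {v w : ℕ × ℕ} (h : Frac x v w) :
    v.1 < n ∧ v.2 < n ∧ w.1 < n ∧ w.2 < n := by
  rcases h with ⟨h1, h2, h3⟩ | ⟨h1, h2, h3⟩
  · have := frR_bounds hx h3
    omega
  · have := frC_bounds hx h3
    omega

lemma frac_right {i j : ℕ} (h : frR x i (j + 1)) : Frac x (i, j) (i, j + 1) :=
  Or.inl ⟨rfl, Or.inl rfl, by rwa [Nat.max_eq_right (by omega)]⟩

lemma frac_left {i j : ℕ} (h : frR x i j) (hj : 1 ≤ j) : Frac x (i, j) (i, j - 1) :=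
  Or.inl ⟨rfl, Or.inr (by omega), by rwa [Nat.max_eq_left (by omega)]⟩

lemma frac_down {i j : ℕ} (h : frC x j (i + 1)) : Frac x (i, j) (i + 1, j) :=
  Or.inr ⟨rfl, Or.inl rfl, by rwa [Nat.max_eq_right (by omega)]⟩

lemma frac_up {i j : ℕ} (h : frC x j i) (hi : 1 ≤ i) : Frac x (i, j) (i - 1, j) :=
  Or.inr ⟨rfl, Or.inr (by omega), by rwa [Nat.max_eq_left (by omega)]⟩

/-- every endpoint of a fractional edge has a second fractional edge. -/
lemma Frac_degree (hx : x ∈ Qset n) {v w : ℕ × ℕ} (h : Frac x v w) :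
    ∃ u, Frac x v u ∧ u ≠ w := by
  obtain ⟨i, j⟩ := v
  have hlt := Frac_lt hx h
  simp only at hlt
  have hi : i < n := hlt.1
  have hj : j < n := hlt.2.1
  have hpar := parity hx hi hj
  have hne : ∀ u1 u2 : ℕ, (u1, u2) ≠ w ∨ True := fun _ _ => Or.inr trivial
  rcases h with ⟨h1, h2, h3⟩ | ⟨h1, h2, h3⟩
  · simp only at h1 h2 h3
    rcases h2 with h2 | h2
    · -- w = (i, j+1), right edge fractional
      have hw : w = (i, j + 1) := by
        obtain ⟨w1, w2⟩ := w
        simp only [Prod.mk.injEq]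
        simp only at h1 h2
        omega
      rw [hw] at h3
      have ha : frR x i (j + 1) := by
        simpa [show max j (j + 1) = j + 1 from by omega] using h3
      rcases hpar.1 ha with hb | hc | hd
      · have h1j := (frR_bounds hx hb).2.1
        exact ⟨(i, j - 1), frac_left hb h1j,
          by rw [hw]; intro hc; injection hc with hc1 hc2; omega⟩
      · exact ⟨(i + 1, j), frac_down hc,
          by rw [hw]; intro hc; injection hc with hc1 hc2; omega⟩
      · have h1i := (frC_bounds hx hd).2.1
        exact ⟨(i - 1, j), frac_up hd h1i,
          by rw [hw]; intro hc; injection hc with hc1 hc2; omega⟩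
    · -- w = (i, j-1), left edge fractional
      have h1j : 1 ≤ j := by omega
      have hw : w = (i, j - 1) := by
        obtain ⟨w1, w2⟩ := w
        simp only [Prod.mk.injEq]
        simp only at h1 h2
        omega
      rw [hw] at h3
      have hb : frR x i j := by
        simpa [show max j (j - 1) = j from by omega] using h3
      rcases hpar.2.1 hb with ha | hc | hd
      · exact ⟨(i, j + 1), frac_right ha,
          by rw [hw]; intro hc; injection hc with hc1 hc2; omega⟩
      · exact ⟨(i + 1, j), frac_down hc,
          by rw [hw]; intro hc; injection hc with hc1 hc2; omega⟩
      · have h1i := (frC_bounds hx hd).2.1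
        exact ⟨(i - 1, j), frac_up hd h1i,
          by rw [hw]; intro hc; injection hc with hc1 hc2; omega⟩
  · simp only at h1 h2 h3
    rcases h2 with h2 | h2
    · -- w = (i+1, j), down edge fractional
      have hw : w = (i + 1, j) := by
        obtain ⟨w1, w2⟩ := w
        simp only [Prod.mk.injEq]
        simp only at h1 h2
        omega
      rw [hw] at h3
      have hc : frC x j (i + 1) := by
        simpa [show max i (i + 1) = i + 1 from by omega] using h3
      rcases hpar.2.2.1 hc with ha | hb | hd
      · exact ⟨(i, j + 1), frac_right ha,
          by rw [hw]; intro hc; injection hc with hc1 hc2; omega⟩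
      · have h1j := (frR_bounds hx hb).2.1
        exact ⟨(i, j - 1), frac_left hb h1j,
          by rw [hw]; intro hc; injection hc with hc1 hc2; omega⟩
      · have h1i := (frC_bounds hx hd).2.1
        exact ⟨(i - 1, j), frac_up hd h1i,
          by rw [hw]; intro hc; injection hc with hc1 hc2; omega⟩
    · -- w = (i-1, j), up edge fractional
      have h1i : 1 ≤ i := by omega
      have hw : w = (i - 1, j) := by
        obtain ⟨w1, w2⟩ := w
        simp only [Prod.mk.injEq]
        simp only at h1 h2
        omega
      rw [hw] at h3
      have hd : frC x j i := by
        simpa [show max i (i - 1) = i from by omega] using h3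
      rcases hpar.2.2.2 hd with ha | hb | hc
      · exact ⟨(i, j + 1), frac_right ha,
          by rw [hw]; intro hc; injection hc with hc1 hc2; omega⟩
      · have h1j := (frR_bounds hx hb).2.1
        exact ⟨(i, j - 1), frac_left hb h1j,
          by rw [hw]; intro hc; injection hc with hc1 hc2; omega⟩
      · exact ⟨(i + 1, j), frac_down hc,
          by rw [hw]; intro hcc; injection hcc with hc1 hc2; omega⟩

/-! ### circulation along a closed walk -/

/-- contribution of step `k` of walk `v` to the horizontal edge `(i, t)`
(between nodes `(i,t-1)` and `(i,t)`). -/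
def stepH (v : ℕ → ℕ × ℕ) (k i t : ℕ) : ℝ :=
  (if (v k).1 = i ∧ (v (k+1)).1 = i ∧ (v k).2 + 1 = t ∧ (v (k+1)).2 = t then 1 else 0)
  - (if (v k).1 = i ∧ (v (k+1)).1 = i ∧ (v k).2 = t ∧ (v (k+1)).2 + 1 = t then 1 else 0)

/-- contribution of step `k` of walk `v` to the vertical edge `(j, t)`
(between nodes `(t-1,j)` and `(t,j)`). -/
def stepV (v : ℕ → ℕ × ℕ) (k j t : ℕ) : ℝ :=
  (if (v k).2 = j ∧ (v (k+1)).2 = j ∧ (v k).1 = t ∧ (v (k+1)).1 + 1 = t then 1 else 0)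
  - (if (v k).2 = j ∧ (v (k+1)).2 = j ∧ (v k).1 + 1 = t ∧ (v (k+1)).1 = t then 1 else 0)

/-- shape of a grid step. -/
def StepShape (p q : ℕ × ℕ) : Prop :=
  (p.1 = q.1 ∧ (p.2 + 1 = q.2 ∨ q.2 + 1 = p.2)) ∨
  (p.2 = q.2 ∧ (p.1 + 1 = q.1 ∨ q.1 + 1 = p.1))

lemma Frac_shape {p q : ℕ × ℕ} (h : Frac x p q) : StepShape p q := by
  rcases h with ⟨h1, h2, _⟩ | ⟨h1, h2, _⟩
  · exact Or.inl ⟨h1, h2⟩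
  · exact Or.inr ⟨h1, h2⟩

lemma step_local (v : ℕ → ℕ × ℕ) (k i j : ℕ) (hadj : StepShape (v k) (v (k+1))) :
    (stepH v k i (j+1) - stepH v k i j) - (stepV v k j (i+1) - stepV v k j i)
      = (if v k = (i, j) then 1 else 0) - (if v (k+1) = (i, j) then 1 else 0) := by
  have e1 : (v k = (i, j)) ↔ ((v k).1 = i ∧ (v k).2 = j) := by
    rw [Prod.ext_iff]
  have e2 : (v (k+1) = (i, j)) ↔ ((v (k+1)).1 = i ∧ (v (k+1)).2 = j) := by
    rw [Prod.ext_iff]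
  rcases hadj with ⟨h1, h2 | h2⟩ | ⟨h1, h2 | h2⟩
  · have hV : ∀ t, stepV v k j t = 0 := by
      intro t
      have hz1 : (if ((v k).2 = j ∧ (v (k+1)).2 = j ∧ (v k).1 = t ∧ (v (k+1)).1 + 1 = t)
          then (1:ℝ) else 0) = 0 := if_neg (by omega)
      have hz2 : (if ((v k).2 = j ∧ (v (k+1)).2 = j ∧ (v k).1 + 1 = t ∧ (v (k+1)).1 = t)
          then (1:ℝ) else 0) = 0 := if_neg (by omega)
      rw [stepV, hz1, hz2]; ring
    have hH : ∀ t, stepH v k i t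
        = (if ((v k).1 = i ∧ (v (k+1)).1 = i ∧ (v k).2 + 1 = t ∧ (v (k+1)).2 = t) then (1:ℝ) else 0) := by
      intro t
      have hz : (if ((v k).1 = i ∧ (v (k+1)).1 = i ∧ (v k).2 = t ∧ (v (k+1)).2 + 1 = t)
          then (1:ℝ) else 0) = 0 := if_neg (by omega)
      rw [stepH, hz]; ring
    rw [hV, hV, hH, hH]
    simp only [e1, e2]
    split_ifs <;> first | (norm_num; done) | (exfalso; omega)
  · have hV : ∀ t, stepV v k j t = 0 := by
      intro t
      have hz1 : (if ((v k).2 = j ∧ (v (k+1)).2 = j ∧ (v k).1 = t ∧ (v (k+1)).1 + 1 = t)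
          then (1:ℝ) else 0) = 0 := if_neg (by omega)
      have hz2 : (if ((v k).2 = j ∧ (v (k+1)).2 = j ∧ (v k).1 + 1 = t ∧ (v (k+1)).1 = t)
          then (1:ℝ) else 0) = 0 := if_neg (by omega)
      rw [stepV, hz1, hz2]; ring
    have hH : ∀ t, stepH v k i t
        = - (if ((v k).1 = i ∧ (v (k+1)).1 = i ∧ (v k).2 = t ∧ (v (k+1)).2 + 1 = t) then (1:ℝ) else 0) := by
      intro t
      have hz : (if ((v k).1 = i ∧ (v (k+1)).1 = i ∧ (v k).2 + 1 = t ∧ (v (k+1)).2 = t)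
          then (1:ℝ) else 0) = 0 := if_neg (by omega)
      rw [stepH, hz]; ring
    rw [hV, hV, hH, hH]
    simp only [e1, e2]
    split_ifs <;> first | (norm_num; done) | (exfalso; omega)
  · have hH : ∀ t, stepH v k i t = 0 := by
      intro t
      have hz1 : (if ((v k).1 = i ∧ (v (k+1)).1 = i ∧ (v k).2 + 1 = t ∧ (v (k+1)).2 = t)
          then (1:ℝ) else 0) = 0 := if_neg (by omega)
      have hz2 : (if ((v k).1 = i ∧ (v (k+1)).1 = i ∧ (v k).2 = t ∧ (v (k+1)).2 + 1 = t)
          then (1:ℝ) else 0) = 0 := if_neg (by omega)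
      rw [stepH, hz1, hz2]; ring
    have hV : ∀ t, stepV v k j t
        = - (if ((v k).2 = j ∧ (v (k+1)).2 = j ∧ (v k).1 + 1 = t ∧ (v (k+1)).1 = t) then (1:ℝ) else 0) := by
      intro t
      have hz : (if ((v k).2 = j ∧ (v (k+1)).2 = j ∧ (v k).1 = t ∧ (v (k+1)).1 + 1 = t)
          then (1:ℝ) else 0) = 0 := if_neg (by omega)
      rw [stepV, hz]; ring
    rw [hH, hH, hV, hV]
    simp only [e1, e2]
    split_ifs <;> first | (norm_num; done) | (exfalso; omega)
  · have hH : ∀ t, stepH v k i t = 0 := by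
      intro t
      have hz1 : (if ((v k).1 = i ∧ (v (k+1)).1 = i ∧ (v k).2 + 1 = t ∧ (v (k+1)).2 = t)
          then (1:ℝ) else 0) = 0 := if_neg (by omega)
      have hz2 : (if ((v k).1 = i ∧ (v (k+1)).1 = i ∧ (v k).2 = t ∧ (v (k+1)).2 + 1 = t)
          then (1:ℝ) else 0) = 0 := if_neg (by omega)
      rw [stepH, hz1, hz2]; ring
    have hV : ∀ t, stepV v k j t
        = (if ((v k).2 = j ∧ (v (k+1)).2 = j ∧ (v k).1 = t ∧ (v (k+1)).1 + 1 = t) then (1:ℝ) else 0) := by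
      intro t
      have hz : (if ((v k).2 = j ∧ (v (k+1)).2 = j ∧ (v k).1 + 1 = t ∧ (v (k+1)).1 = t)
          then (1:ℝ) else 0) = 0 := if_neg (by omega)
      rw [stepV, hz]; ring
    rw [hH, hH, hV, hV]
    simp only [e1, e2]
    split_ifs <;> first | (norm_num; done) | (exfalso; omega)

/-- total flow on horizontal edge `(i,t)` along the first `m` steps. -/
def phiR (v : ℕ → ℕ × ℕ) (m i t : ℕ) : ℝ := ∑ k ∈ Finset.range m, stepH v k i t

/-- total flow on vertical edge `(j,t)` along the first `m` steps. -/
def phiC (v : ℕ → ℕ × ℕ) (m j t : ℕ) : ℝ := ∑ k ∈ Finset.range m, stepV v k j t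

lemma phi_conserve (v : ℕ → ℕ × ℕ) (m : ℕ) (hadj : ∀ k, StepShape (v k) (v (k+1)))
    (hclose : v m = v 0) (i j : ℕ) :
    (phiR v m i (j+1) - phiR v m i j) - (phiC v m j (i+1) - phiC v m j i) = 0 := by
  rw [phiR, phiR, phiC, phiC, ← Finset.sum_sub_distrib, ← Finset.sum_sub_distrib,
    ← Finset.sum_sub_distrib]
  rw [Finset.sum_congr rfl (fun k _ => step_local v k i j (hadj k))]
  rw [Finset.sum_range_sub' (fun k => if v k = (i, j) then (1:ℝ) else 0) m, hclose, sub_self]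

lemma stepH_zero (v : ℕ → ℕ × ℕ) (k i : ℕ) : stepH v k i 0 = 0 := by
  rw [stepH, if_neg (by omega), if_neg (by omega), sub_self]

lemma stepV_zero (v : ℕ → ℕ × ℕ) (k j : ℕ) : stepV v k j 0 = 0 := by
  rw [stepV, if_neg (by omega), if_neg (by omega), sub_self]

lemma phiR_zero (v : ℕ → ℕ × ℕ) (m i : ℕ) : phiR v m i 0 = 0 := by
  rw [phiR]
  exact Finset.sum_eq_zero fun k _ => stepH_zero v k i

lemma phiC_zero (v : ℕ → ℕ × ℕ) (m j : ℕ) : phiC v m j 0 = 0 := by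
  rw [phiC]
  exact Finset.sum_eq_zero fun k _ => stepV_zero v k j

lemma stepH_support {v : ℕ → ℕ × ℕ} {k i t : ℕ} (hadj : Frac x (v k) (v (k+1)))
    (h : stepH v k i t ≠ 0) : frR x i t := by
  rw [stepH] at h
  have hcond : ((v k).1 = i ∧ (v (k+1)).1 = i ∧ (v k).2 + 1 = t ∧ (v (k+1)).2 = t) ∨
      ((v k).1 = i ∧ (v (k+1)).1 = i ∧ (v k).2 = t ∧ (v (k+1)).2 + 1 = t) := by
    by_contra hno
    push_neg at hno
    rw [if_neg (by tauto), if_neg (by tauto), sub_self] at h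
    exact h rfl
  have hne2 : (v k).2 ≠ (v (k+1)).2 := by rcases hcond with hc | hc <;> omega
  rcases hadj with ⟨h1, h2, h3⟩ | ⟨h1, h2, h3⟩
  · have hmax : max (v k).2 (v (k+1)).2 = t := by rcases hcond with hc | hc <;> omega
    have hrow : (v k).1 = i := by rcases hcond with hc | hc <;> exact hc.1
    rwa [hrow, hmax] at h3
  · exact absurd h1 hne2
lemma stepV_support {v : ℕ → ℕ × ℕ} {k j t : ℕ} (hadj : Frac x (v k) (v (k+1)))
    (h : stepV v k j t ≠ 0) : frC x j t := by
  rw [stepV] at h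
  have hcond : ((v k).2 = j ∧ (v (k+1)).2 = j ∧ (v k).1 = t ∧ (v (k+1)).1 + 1 = t) ∨
      ((v k).2 = j ∧ (v (k+1)).2 = j ∧ (v k).1 + 1 = t ∧ (v (k+1)).1 = t) := by
    by_contra hno
    push_neg at hno
    rw [if_neg (by tauto), if_neg (by tauto), sub_self] at h
    exact h rfl
  have hne1 : (v k).1 ≠ (v (k+1)).1 := by rcases hcond with hc | hc <;> omega
  rcases hadj with ⟨h1, h2, h3⟩ | ⟨h1, h2, h3⟩
  · exact absurd h1 hne1
  · have hmax : max (v k).1 (v (k+1)).1 = t := by rcases hcond with hc | hc <;> omega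
    have hcol : (v k).2 = j := by rcases hcond with hc | hc <;> exact hc.1
    rwa [hcol, hmax] at h3

/-! ### the non-backtracking walk -/

/-- One walk step: continue from the head of the previous fractional edge
along a different fractional edge. -/
noncomputable def wstep (hx : x ∈ Qset n)
    (s : {p : (ℕ × ℕ) × (ℕ × ℕ) // Frac x p.1 p.2}) :
    {p : (ℕ × ℕ) × (ℕ × ℕ) // Frac x p.1 p.2} :=
  ⟨(s.val.2, Classical.choose (Frac_degree hx (Frac_symm s.property))),
    (Classical.choose_spec (Frac_degree hx (Frac_symm s.property))).1⟩

noncomputable def walk (hx : x ∈ Qset n)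
    (s0 : {p : (ℕ × ℕ) × (ℕ × ℕ) // Frac x p.1 p.2}) :
    ℕ → {p : (ℕ × ℕ) × (ℕ × ℕ) // Frac x p.1 p.2}
  | 0 => s0
  | (k+1) => wstep hx (walk hx s0 k)

lemma walk_nb (hx : x ∈ Qset n) (s0) (k : ℕ) :
    (walk hx s0 (k+1)).val.2 ≠ (walk hx s0 k).val.1 :=
  (Classical.choose_spec (Frac_degree hx (Frac_symm (walk hx s0 k).property))).2

/-- the first edge of an injective closed walk is traversed only once
(horizontal version). -/
lemma once_H (v : ℕ → ℕ × ℕ) (m : ℕ) (hinj : ∀ p q, p < q → q < m → v p ≠ v q)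
    (hm : 3 ≤ m) (i0 t0 : ℕ) (h0 : (v 0).1 = i0) (h1 : (v 1).1 = i0)
    (hor : ((v 0).2 + 1 = t0 ∧ (v 1).2 = t0) ∨ ((v 1).2 + 1 = t0 ∧ (v 0).2 = t0)) :
    ∀ k ∈ Finset.range m, k ≠ 0 → stepH v k i0 t0 = 0 := by
  intro k hk hk0
  by_contra hne
  have hkm := Finset.mem_range.mp hk
  have hcond : ((v k).1 = i0 ∧ (v (k+1)).1 = i0 ∧ (v k).2 + 1 = t0 ∧ (v (k+1)).2 = t0) ∨
      ((v k).1 = i0 ∧ (v (k+1)).1 = i0 ∧ (v k).2 = t0 ∧ (v (k+1)).2 + 1 = t0) := by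
    by_contra hno
    push_neg at hno
    rw [stepH, if_neg (by tauto), if_neg (by tauto), sub_self] at hne
    exact hne rfl
  have hkpair : (v k = v 0 ∧ v (k+1) = v 1) ∨ (v k = v 1 ∧ v (k+1) = v 0) := by
    rcases hor with ⟨ho1, ho2⟩ | ⟨ho1, ho2⟩ <;> rcases hcond with hc | hc
    · exact Or.inl ⟨Prod.ext (by omega) (by omega), Prod.ext (by omega) (by omega)⟩
    · exact Or.inr ⟨Prod.ext (by omega) (by omega), Prod.ext (by omega) (by omega)⟩
    · exact Or.inr ⟨Prod.ext (by omega) (by omega), Prod.ext (by omega) (by omega)⟩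
    · exact Or.inl ⟨Prod.ext (by omega) (by omega), Prod.ext (by omega) (by omega)⟩
  rcases hkpair with ⟨hp1, hp2⟩ | ⟨hp1, hp2⟩
  · exact hinj 0 k (by omega) hkm hp1.symm
  · rcases Nat.lt_or_ge (k+1) m with hlt | hge
    · exact hinj 0 (k+1) (by omega) hlt hp2.symm
    · exact hinj 1 k (by omega) hkm hp1.symm

/-- vertical version. -/
lemma once_V (v : ℕ → ℕ × ℕ) (m : ℕ) (hinj : ∀ p q, p < q → q < m → v p ≠ v q)
    (hm : 3 ≤ m) (j0 t0 : ℕ) (h0 : (v 0).2 = j0) (h1 : (v 1).2 = j0)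
    (hor : ((v 0).1 + 1 = t0 ∧ (v 1).1 = t0) ∨ ((v 1).1 + 1 = t0 ∧ (v 0).1 = t0)) :
    ∀ k ∈ Finset.range m, k ≠ 0 → stepV v k j0 t0 = 0 := by
  intro k hk hk0
  by_contra hne
  have hkm := Finset.mem_range.mp hk
  have hcond : ((v k).2 = j0 ∧ (v (k+1)).2 = j0 ∧ (v k).1 = t0 ∧ (v (k+1)).1 + 1 = t0) ∨
      ((v k).2 = j0 ∧ (v (k+1)).2 = j0 ∧ (v k).1 + 1 = t0 ∧ (v (k+1)).1 = t0) := by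
    by_contra hno
    push_neg at hno
    rw [stepV, if_neg (by tauto), if_neg (by tauto), sub_self] at hne
    exact hne rfl
  have hkpair : (v k = v 0 ∧ v (k+1) = v 1) ∨ (v k = v 1 ∧ v (k+1) = v 0) := by
    rcases hor with ⟨ho1, ho2⟩ | ⟨ho1, ho2⟩ <;> rcases hcond with hc | hc
    · exact Or.inr ⟨Prod.ext (by omega) (by omega), Prod.ext (by omega) (by omega)⟩
    · exact Or.inl ⟨Prod.ext (by omega) (by omega), Prod.ext (by omega) (by omega)⟩
    · exact Or.inl ⟨Prod.ext (by omega) (by omega), Prod.ext (by omega) (by omega)⟩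
    · exact Or.inr ⟨Prod.ext (by omega) (by omega), Prod.ext (by omega) (by omega)⟩
  rcases hkpair with ⟨hp1, hp2⟩ | ⟨hp1, hp2⟩
  · exact hinj 0 k (by omega) hkm hp1.symm
  · rcases Nat.lt_or_ge (k+1) m with hlt | hge
    · exact hinj 0 (k+1) (by omega) hlt hp2.symm
    · exact hinj 1 k (by omega) hkm hp1.symm

/-- The key perturbation lemma: if `x ∈ Q` has a fractional constraint, there
is a nonzero direction `δ` annihilated by all constraints tight at `x`. -/
lemma exists_perturb (hx : x ∈ Qset n) (e0 : Etype n) (hfr : fE e0 x ∉ ({0, 1} : Set ℝ)) :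
    ∃ δ : Matrix (Fin n) (Fin n) ℝ, δ ≠ 0 ∧
      ∀ e : Etype n, fE e x ∈ ({0, 1} : Set ℝ) → fE e δ = 0 := by
  classical
  -- initial fractional edge
  obtain ⟨p0, hp0⟩ : ∃ p : (ℕ × ℕ) × (ℕ × ℕ), Frac x p.1 p.2 := by
    rcases e0 with ⟨i, j⟩ | ⟨i, j⟩
    · have hfrR : frR x (i : ℕ) ((j : ℕ) + 1) := by
        show Rn x _ _ ∉ _
        rw [Rn_rowPartial]
        exact hfr
      exact ⟨(((i : ℕ), (j : ℕ)), ((i : ℕ), (j : ℕ) + 1)), frac_right hfrR⟩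
    · have hfrC : frC x (j : ℕ) ((i : ℕ) + 1) := by
        show Cn x _ _ ∉ _
        rw [Cn_colPartial]
        exact hfr
      exact ⟨(((i : ℕ), (j : ℕ)), ((i : ℕ) + 1, (j : ℕ))), frac_down hfrC⟩
  set s0 : {p : (ℕ × ℕ) × (ℕ × ℕ) // Frac x p.1 p.2} := ⟨p0, hp0⟩ with hs0
  set vv : ℕ → ℕ × ℕ := fun k => (walk hx s0 k).val.1 with hvv
  have hv1 : ∀ k, (walk hx s0 k).val.2 = vv (k+1) := fun k => rfl
  have hadj : ∀ k, Frac x (vv k) (vv (k+1)) := by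
    intro k
    have := (walk hx s0 k).property
    rwa [hv1 k] at this
  have hnb : ∀ k, vv (k+2) ≠ vv k := by
    intro k
    have := walk_nb hx s0 k
    rwa [hv1 (k+1)] at this
  have hshape : ∀ k, StepShape (vv k) (vv (k+1)) := fun k => Frac_shape (hadj k)
  have hbound : ∀ k, (vv k).1 < n ∧ (vv k).2 < n :=
    fun k => ⟨(Frac_lt hx (hadj k)).1, (Frac_lt hx (hadj k)).2.1⟩
  -- pigeonhole: the walk repeats a node
  have hfind : ∃ l, ∃ a, a < l ∧ vv a = vv l := by
    have hcard : Fintype.card (Fin n × Fin n) < Fintype.card (Fin (n*n+1)) := by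
      simp [Fintype.card_prod]
    obtain ⟨k1, k2, hk, heq⟩ := Fintype.exists_ne_map_eq_of_card_lt
      (fun k : Fin (n*n+1) =>
        ((⟨(vv (k : ℕ)).1, (hbound (k : ℕ)).1⟩ : Fin n),
         (⟨(vv (k : ℕ)).2, (hbound (k : ℕ)).2⟩ : Fin n))) hcard
    have heq' : vv (k1 : ℕ) = vv (k2 : ℕ) :=
      Prod.ext (congrArg Fin.val (congrArg Prod.fst heq))
        (congrArg Fin.val (congrArg Prod.snd heq))
    have hkk : (k1 : ℕ) ≠ (k2 : ℕ) := fun hc => hk (Fin.ext hc)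
    rcases Nat.lt_or_ge (k1 : ℕ) (k2 : ℕ) with h | h
    · exact ⟨k2, k1, h, heq'⟩
    · exact ⟨k1, k2, by omega, heq'.symm⟩
  set L := Nat.find hfind with hLdef
  obtain ⟨a, haL, haeq⟩ := Nat.find_spec hfind
  rw [← hLdef] at haL haeq
  have hinj : ∀ p q, p < q → q < L → vv p ≠ vv q := by
    intro p q hpq hqL heqq
    exact Nat.find_min hfind hqL ⟨p, hpq, heqq⟩
  have hm3 : 3 ≤ L - a := by
    by_contra hlt
    have : L = a + 1 ∨ L = a + 2 := by omega
    rcases this with h | h <;> rw [h] at haeq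
    · exact Frac_ne (hadj a) haeq
    · exact hnb a haeq.symm
  set m : ℕ := L - a with hmdef
  set ww : ℕ → ℕ × ℕ := fun k => vv (a + k) with hww
  have wwadj : ∀ k, Frac x (ww k) (ww (k+1)) := fun k => hadj (a + k)
  have wwshape : ∀ k, StepShape (ww k) (ww (k+1)) := fun k => hshape (a + k)
  have wwclose : ww m = ww 0 := by
    show vv (a + m) = vv (a + 0)
    rw [show a + m = L by omega, show a + 0 = a from rfl]
    exact haeq.symm
  have wwinj : ∀ p q, p < q → q < m → ww p ≠ ww q :=
    fun p q h1 h2 => hinj (a + p) (a + q) (by omega) (by omega)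
  -- the perturbation matrix
  set δ : Matrix (Fin n) (Fin n) ℝ :=
    Matrix.of (fun i j : Fin n => phiR ww m (i : ℕ) ((j : ℕ) + 1) - phiR ww m (i : ℕ) (j : ℕ))
    with hδ
  have hδapp : ∀ i j : Fin n, δ i j
      = phiR ww m (i : ℕ) ((j : ℕ) + 1) - phiR ww m (i : ℕ) (j : ℕ) := fun i j => rfl
  have hrow : ∀ i j : Fin n, rowPartial δ i j = phiR ww m (i : ℕ) ((j : ℕ) + 1) := by
    intro i j
    rw [rowPartial, sum_filter_le_eq]
    rw [Finset.sum_congr rfl (fun s hs => ?_), Finset.sum_range_sub (fun t => phiR ww m (i : ℕ) t)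
      ((j : ℕ) + 1), phiR_zero, sub_zero]
    have hsn : s < n := by
      have := Finset.mem_range.mp hs
      omega
    rw [dif_pos hsn, hδapp]
  have hcol : ∀ i j : Fin n, colPartial δ i j = phiC ww m (j : ℕ) ((i : ℕ) + 1) := by
    intro i j
    rw [colPartial, sum_filter_le_eq]
    rw [Finset.sum_congr rfl (fun s hs => ?_), Finset.sum_range_sub (fun t => phiC ww m (j : ℕ) t)
      ((i : ℕ) + 1), phiC_zero, sub_zero]
    have hsn : s < n := by
      have := Finset.mem_range.mp hs
      omega
    rw [dif_pos hsn, hδapp]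
    have := phi_conserve ww m wwshape wwclose s (j : ℕ)
    linarith
  refine ⟨δ, ?_, ?_⟩
  · -- δ ≠ 0
    intro h0
    have hadj0 : Frac x (ww 0) (ww 1) := wwadj 0
    rcases hadj0 with ⟨h1, h2, h3⟩ | ⟨h1, h2, h3⟩
    · -- first edge horizontal
      have hb := frR_bounds hx h3
      have hor : ((ww 0).2 + 1 = max (ww 0).2 (ww 1).2 ∧ (ww 1).2 = max (ww 0).2 (ww 1).2) ∨
          ((ww 1).2 + 1 = max (ww 0).2 (ww 1).2 ∧ (ww 0).2 = max (ww 0).2 (ww 1).2) := by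
        rcases h2 with hd | hd
        · left
          rw [Nat.max_eq_right (by omega)]
          omega
        · right
          rw [Nat.max_eq_left (by omega)]
          omega
      have honce := once_H ww m wwinj hm3 (ww 0).1 (max (ww 0).2 (ww 1).2) rfl h1.symm hor
      have hphi : phiR ww m (ww 0).1 (max (ww 0).2 (ww 1).2)
          = stepH ww 0 (ww 0).1 (max (ww 0).2 (ww 1).2) :=
        Finset.sum_eq_single_of_mem 0 (Finset.mem_range.mpr (by omega)) honce
      have hstep0 : stepH ww 0 (ww 0).1 (max (ww 0).2 (ww 1).2) ≠ 0 := by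
        rcases hor with ⟨ho1, ho2⟩ | ⟨ho1, ho2⟩
        · rw [stepH, if_pos ⟨rfl, h1.symm, ho1, ho2⟩, if_neg (by omega)]
          norm_num
        · rw [stepH, if_neg (by omega), if_pos ⟨rfl, h1.symm, ho2, ho1⟩]
          norm_num
      have hz : rowPartial δ ⟨(ww 0).1, hb.1⟩ ⟨max (ww 0).2 (ww 1).2 - 1, by omega⟩ = 0 := by
        rw [h0]
        simp [rowPartial]
      rw [hrow] at hz
      have hz2 : phiR ww m (ww 0).1 (max (ww 0).2 (ww 1).2 - 1 + 1) = 0 := hz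
      rw [show max (ww 0).2 (ww 1).2 - 1 + 1 = max (ww 0).2 (ww 1).2 by omega, hphi] at hz2
      exact hstep0 hz2
    · -- first edge vertical
      have hb := frC_bounds hx h3
      have hor : ((ww 0).1 + 1 = max (ww 0).1 (ww 1).1 ∧ (ww 1).1 = max (ww 0).1 (ww 1).1) ∨
          ((ww 1).1 + 1 = max (ww 0).1 (ww 1).1 ∧ (ww 0).1 = max (ww 0).1 (ww 1).1) := by
        rcases h2 with hd | hd
        · left
          rw [Nat.max_eq_right (by omega)]
          omega
        · right
          rw [Nat.max_eq_left (by omega)]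
          omega
      have honce := once_V ww m wwinj hm3 (ww 0).2 (max (ww 0).1 (ww 1).1) rfl h1.symm hor
      have hphi : phiC ww m (ww 0).2 (max (ww 0).1 (ww 1).1)
          = stepV ww 0 (ww 0).2 (max (ww 0).1 (ww 1).1) :=
        Finset.sum_eq_single_of_mem 0 (Finset.mem_range.mpr (by omega)) honce
      have hstep0 : stepV ww 0 (ww 0).2 (max (ww 0).1 (ww 1).1) ≠ 0 := by
        rcases hor with ⟨ho1, ho2⟩ | ⟨ho1, ho2⟩
        · rw [stepV, if_neg (by omega), if_pos ⟨rfl, h1.symm, ho1, ho2⟩]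
          norm_num
        · rw [stepV, if_pos ⟨rfl, h1.symm, ho2, ho1⟩, if_neg (by omega)]
          norm_num
      have hz : colPartial δ ⟨max (ww 0).1 (ww 1).1 - 1, by omega⟩ ⟨(ww 0).2, hb.1⟩ = 0 := by
        rw [h0]
        simp [colPartial]
      rw [hcol] at hz
      have hz2 : phiC ww m (ww 0).2 (max (ww 0).1 (ww 1).1 - 1 + 1) = 0 := hz
      rw [show max (ww 0).1 (ww 1).1 - 1 + 1 = max (ww 0).1 (ww 1).1 by omega, hphi] at hz2
      exact hstep0 hz2
  · -- tight constraints stay tight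
    intro e he
    rcases e with ⟨i, j⟩ | ⟨i, j⟩
    · show rowPartial δ i j = 0
      rw [hrow, phiR]
      apply Finset.sum_eq_zero
      intro k _
      by_contra hne
      exact stepH_support (wwadj k) hne (by rw [Rn_rowPartial]; exact he)
    · show colPartial δ i j = 0
      rw [hcol, phiC]
      apply Finset.sum_eq_zero
      intro k _
      by_contra hne
      exact stepV_support (wwadj k) hne (by rw [Cn_colPartial]; exact he)

/-! ### the hull description of the ASM polytope -/

lemma integral_isASM (hx : x ∈ Qset n) (hint : ∀ e : Etype n, fE e x ∈ ({0, 1} : Set ℝ)) :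
    IsASM x := by
  have hval : ∀ (i : Fin n) (t : ℕ), t ≤ n → psum (x i) t = 0 ∨ psum (x i) t = 1 := by
    intro i t htn
    rcases Nat.eq_zero_or_pos t with rfl | ht
    · exact Or.inl (psum_zero _)
    · have hj : (⟨t - 1, by omega⟩ : Fin n).val + 1 = t := by
        simp only []
        omega
      have := mem01.mp (hint (Sum.inl (i, ⟨t - 1, by omega⟩)))
      rwa [show fE (Sum.inl (i, (⟨t - 1, by omega⟩ : Fin n))) x
          = rowPartial x i ⟨t - 1, by omega⟩ from rfl, rowPartial_eq_psum, hj] at this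
  refine ⟨?_, ?_, ?_, hx.2.1, hx.2.2⟩
  · intro i j
    have h1 := hval i ((j : ℕ) + 1) (by omega)
    have h2 := hval i (j : ℕ) (by omega)
    have he := entry_eq_psum x i j
    rcases h1 with h1 | h1 <;> rcases h2 with h2 | h2 <;> rw [h1, h2] at he <;>
      rw [he] <;> norm_num
  · intro i j
    exact mem01.mp (hint (Sum.inl (i, j)))
  · intro i j
    exact mem01.mp (hint (Sum.inr (i, j)))

/-- Moving from `y ∈ Q` in an admissible direction until a new constraint gets tight. -/
lemma move {y : Matrix (Fin n) (Fin n) ℝ} (hy : y ∈ Qset n) (δ : Matrix (Fin n) (Fin n) ℝ)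
    (hδ0 : δ ≠ 0) (hδt : ∀ e : Etype n, fE e y ∈ ({0, 1} : Set ℝ) → fE e δ = 0) :
    ∃ z ∈ Qset n, (∃ ε : ℝ, 0 < ε ∧ z = y + ε • δ) ∧
      (Finset.univ.filter (fun e : Etype n => fE e z ∉ ({0, 1} : Set ℝ))) ⊂
        (Finset.univ.filter (fun e : Etype n => fE e y ∉ ({0, 1} : Set ℝ))) := by
  classical
  have hne : ∃ e : Etype n, fE e δ ≠ 0 := by
    by_contra hno
    push_neg at hno
    exact hδ0 (eq_zero_of_rowPartial δ (fun i j => hno (Sum.inl (i, j))))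
  set D : Finset (Etype n) := Finset.univ.filter (fun e => fE e δ ≠ 0) with hD
  have hDne : D.Nonempty := ⟨hne.choose, by simp [hD, hne.choose_spec]⟩
  have hn0 : 0 < n := by
    obtain ⟨e, _⟩ := hDne
    rcases e with ⟨i, _⟩ | ⟨i, _⟩ <;> exact i.pos
  have hDfr : ∀ e ∈ D, 0 < fE e y ∧ fE e y < 1 := by
    intro e he
    simp only [hD, Finset.mem_filter] at he
    have hy01 := hy.1 e
    have h2 : ¬(fE e y = 0 ∨ fE e y = 1) := fun hc => he.2 (hδt e (mem01.mpr hc))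
    push_neg at h2
    exact ⟨(hy01.1).lt_of_ne' h2.1, (hy01.2).lt_of_ne h2.2⟩
  set g : Etype n → ℝ := fun e => if 0 < fE e δ then (1 - fE e y) / fE e δ
    else (fE e y) / (- fE e δ) with hg
  have hgval : ∀ e, g e = if 0 < fE e δ then (1 - fE e y) / fE e δ
      else (fE e y) / (- fE e δ) := fun e => rfl
  have hgpos : ∀ e ∈ D, 0 < g e := by
    intro e he
    have hfr := hDfr e he
    have hδe : fE e δ ≠ 0 := by
      simp only [hD, Finset.mem_filter] at he
      exact he.2
    rw [hgval e]
    split_ifs with h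
    · exact div_pos (by linarith) h
    · have hlt : fE e δ < 0 := lt_of_le_of_ne (not_lt.mp h) hδe
      exact div_pos (by linarith) (by linarith)
  set ε := D.inf' hDne g with hε
  have hεpos : 0 < ε := by
    rw [hε]
    exact (Finset.lt_inf'_iff hDne).mpr hgpos
  have hεle : ∀ e ∈ D, ε ≤ g e := fun e he => by
    rw [hε]
    exact Finset.inf'_le g he
  have hzval : ∀ e : Etype n, fE e (y + ε • δ) = fE e y + ε * fE e δ := fun e => by
    rw [fE_add, fE_smul]
  have jlast : Fin n := ⟨n - 1, by omega⟩
  refine ⟨y + ε • δ, ⟨?_, ?_, ?_⟩, ⟨ε, hεpos, rfl⟩, ?_⟩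
  · intro e
    rw [hzval]
    by_cases ht : fE e y ∈ ({0, 1} : Set ℝ)
    · rw [hδt e ht, mul_zero, add_zero]
      exact hy.1 e
    by_cases hz : fE e δ = 0
    · rw [hz, mul_zero, add_zero]
      exact hy.1 e
    have heD : e ∈ D := by simp [hD, hz]
    have hfr := hDfr e heD
    have hle := hεle e heD
    rw [hgval e] at hle
    constructor
    · split_ifs at hle with h
      · nlinarith
      · have hneg : fE e δ < 0 := lt_of_le_of_ne (not_lt.mp h) hz
        have := (le_div_iff₀ (by linarith : (0:ℝ) < -fE e δ)).mp hle
        nlinarith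
    · split_ifs at hle with h
      · have := (le_div_iff₀ h).mp hle
        nlinarith
      · have hneg : fE e δ < 0 := lt_of_le_of_ne (not_lt.mp h) hz
        nlinarith
  · intro i
    have hrow1 : rowPartial y i ⟨n - 1, by omega⟩ = 1 := by
      rw [sum_eq_rowPartial y i ⟨n - 1, by omega⟩ (by simp; omega)]
      exact hy.2.1 i
    have hrowδ : rowPartial δ i ⟨n - 1, by omega⟩ = 0 := by
      apply hδt (Sum.inl (i, ⟨n - 1, by omega⟩))
      show rowPartial y i _ ∈ _
      rw [hrow1]
      exact Set.mem_insert_of_mem _ rfl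
    simp only [Matrix.add_apply, Matrix.smul_apply, smul_eq_mul, Finset.sum_add_distrib,
      ← Finset.mul_sum]
    rw [hy.2.1 i, ← sum_eq_rowPartial δ i ⟨n - 1, by omega⟩ (by simp; omega), hrowδ]
    ring
  · intro j
    have hcol1 : colPartial y ⟨n - 1, by omega⟩ j = 1 := by
      rw [sum_eq_colPartial y ⟨n - 1, by omega⟩ j (by simp; omega)]
      exact hy.2.2 j
    have hcolδ : colPartial δ ⟨n - 1, by omega⟩ j = 0 := by
      apply hδt (Sum.inr ((⟨n - 1, by omega⟩ : Fin n), j))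
      show colPartial y _ j ∈ _
      rw [hcol1]
      exact Set.mem_insert_of_mem _ rfl
    simp only [Matrix.add_apply, Matrix.smul_apply, smul_eq_mul, Finset.sum_add_distrib,
      ← Finset.mul_sum]
    rw [hy.2.2 j, ← sum_eq_colPartial δ ⟨n - 1, by omega⟩ j (by simp; omega), hcolδ]
    ring
  · have hsub : (Finset.univ.filter (fun e : Etype n => fE e (y + ε • δ) ∉ ({0, 1} : Set ℝ))) ⊆
        (Finset.univ.filter (fun e : Etype n => fE e y ∉ ({0, 1} : Set ℝ))) := by
      intro e he
      simp only [Finset.mem_filter, Finset.mem_univ, true_and] at he ⊢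
      intro hmem
      apply he
      rw [hzval, hδt e hmem, mul_zero, add_zero]
      exact hmem
    rw [Finset.ssubset_iff_of_subset hsub]
    obtain ⟨estar, heD, hev⟩ := Finset.exists_mem_eq_inf' hDne g
    have hδe : fE estar δ ≠ 0 := by
      simp only [hD, Finset.mem_filter] at heD
      exact heD.2
    have hfr := hDfr estar heD
    refine ⟨estar, ?_, ?_⟩
    · simp only [Finset.mem_filter, Finset.mem_univ, true_and]
      rw [mem01]
      push_neg
      constructor <;> intro hc <;> rw [hc] at hfr <;> simp at hfr <;> linarith [hfr.1, hfr.2]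
    · simp only [Finset.mem_filter, Finset.mem_univ, true_and, not_not]
      rw [hzval estar, hε, hev, hgval estar]
      split_ifs with h
      · have h2 : (1 - fE estar y) / fE estar δ * fE estar δ = 1 - fE estar y :=
          div_mul_cancel₀ _ (ne_of_gt h)
        rw [h2, show fE estar y + (1 - fE estar y) = 1 by ring]
        exact Set.mem_insert_of_mem _ rfl
      · have h2 : fE estar y / (- fE estar δ) * fE estar δ = - fE estar y := by
          rw [div_mul_eq_mul_div, div_neg, mul_div_cancel_right₀ _ hδe]
        rw [h2, show fE estar y + - fE estar y = 0 by ring]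
        exact Set.mem_insert _ _

lemma fE_neg (e : Etype n) (δ : Matrix (Fin n) (Fin n) ℝ) : fE e (-δ) = - fE e δ := by
  rw [show -δ = (-1 : ℝ) • δ by simp, fE_smul]
  ring

lemma Qset_subset_ASMPolytope : Qset n ⊆ ASMPolytope n := by
  classical
  suffices h : ∀ (N : ℕ) (y : Matrix (Fin n) (Fin n) ℝ), y ∈ Qset n →
      (Finset.univ.filter (fun e : Etype n => fE e y ∉ ({0, 1} : Set ℝ))).card ≤ N →
      y ∈ ASMPolytope n by
    intro x hx
    exact h _ x hx le_rfl
  intro N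
  induction N with
  | zero =>
    intro y hy hc
    have hall : ∀ e, fE e y ∈ ({0, 1} : Set ℝ) := by
      intro e
      by_contra he
      have : e ∈ Finset.univ.filter (fun e : Etype n => fE e y ∉ ({0, 1} : Set ℝ)) := by
        simp only [Finset.mem_filter, Finset.mem_univ, true_and]
        exact he
      have h2 := Finset.card_pos.mpr ⟨e, this⟩
      omega
    exact subset_convexHull ℝ _ (integral_isASM hy hall)
  | succ N ih =>
    intro y hy hc
    by_cases hall : ∀ e, fE e y ∈ ({0, 1} : Set ℝ)
    · exact subset_convexHull ℝ _ (integral_isASM hy hall)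
    push_neg at hall
    obtain ⟨e0, he0⟩ := hall
    obtain ⟨δ, hδ0, hδt⟩ := exists_perturb hy e0 he0
    obtain ⟨z₁, hz₁Q, ⟨ε₁, hε₁, hz₁d⟩, hss₁⟩ := move hy δ hδ0 hδt
    obtain ⟨z₂, hz₂Q, ⟨ε₂, hε₂, hz₂d⟩, hss₂⟩ := move hy (-δ) (by simpa using hδ0)
      (fun e he => by rw [fE_neg, hδt e he, neg_zero])
    have hz₁P : z₁ ∈ ASMPolytope n := by
      apply ih z₁ hz₁Q
      have := Finset.card_lt_card hss₁
      omega
    have hz₂P : z₂ ∈ ASMPolytope n := by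
      apply ih z₂ hz₂Q
      have := Finset.card_lt_card hss₂
      omega
    have hεsum : 0 < ε₁ + ε₂ := by linarith
    set a : ℝ := ε₂ / (ε₁ + ε₂) with ha
    set b : ℝ := ε₁ / (ε₁ + ε₂) with hb
    have hab : a + b = 1 := by
      rw [ha, hb, ← add_div, add_comm ε₂ ε₁, div_self (ne_of_gt hεsum)]
    have hapos : 0 ≤ a := le_of_lt (div_pos hε₂ hεsum)
    have hbpos : 0 ≤ b := le_of_lt (div_pos hε₁ hεsum)
    have hcomb : a • z₁ + b • z₂ = y := by
      rw [hz₁d, hz₂d]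
      have hsc : a * ε₁ - b * ε₂ = 0 := by
        rw [ha, hb]
        field_simp
        ring
      have expand : a • (y + ε₁ • δ) + b • (y + ε₂ • (-δ))
          = (a + b) • y + (a * ε₁ - b * ε₂) • δ := by
        simp only [smul_add, smul_smul, smul_neg, sub_smul, add_smul]
        abel
      rw [expand, hab, hsc, one_smul, zero_smul, add_zero]
    rw [← hcomb]
    exact (convex_convexHull ℝ _) hz₁P hz₂P hapos hbpos hab

theorem ASMPolytope_eq_Qset : ASMPolytope n = Qset n :=
  Set.Subset.antisymm ASMPolytope_subset_Qset Qset_subset_ASMPolytope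

/-! ### extreme subsets of a convex hull -/

lemma key_carrier {E : Type*} [AddCommGroup E] [Module ℝ E] {ι : Type} {S F : Set E}
    (hext : IsExtreme ℝ (convexHull ℝ S) F) :
    ∀ (t : Finset ι) (w : ι → ℝ) (z : ι → E), (∀ i ∈ t, 0 < w i) → ∑ i ∈ t, w i = 1 →
      (∀ i ∈ t, z i ∈ S) → (∑ i ∈ t, w i • z i) ∈ F → ∀ i ∈ t, z i ∈ F := by
  intro t
  induction t using Finset.induction_on with
  | empty =>
    intro w z _ hw1 _ _ i hi
    exact absurd hi (Finset.notMem_empty i)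
  | @insert i₀ t' hi₀ IH =>
    intro w z hpos hsum hS hmem i hit
    rcases Finset.eq_empty_or_nonempty t' with rfl | ht'ne
    · have hw1 : w i₀ = 1 := by
        rw [Finset.sum_insert (Finset.notMem_empty i₀), Finset.sum_empty, add_zero] at hsum
        exact hsum
      have hx : (∑ j ∈ insert i₀ (∅ : Finset ι), w j • z j) = z i₀ := by
        rw [Finset.sum_insert (Finset.notMem_empty i₀), Finset.sum_empty, add_zero, hw1,
          one_smul]
      rw [hx] at hmem
      have : i = i₀ := by
        rcases Finset.mem_insert.mp hit with h | h
        · exact h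
        · exact absurd h (Finset.notMem_empty i)
      rw [this]
      exact hmem
    · have hs'pos : 0 < ∑ j ∈ t', w j :=
        Finset.sum_pos (fun j hj => hpos j (Finset.mem_insert_of_mem hj)) ht'ne
      set s' := ∑ j ∈ t', w j with hs'
      have hw0 : w i₀ + s' = 1 := by
        rw [hs', ← Finset.sum_insert hi₀]
        exact hsum
      have hw0pos := hpos i₀ (Finset.mem_insert_self _ _)
      set y := ∑ j ∈ t', (w j / s') • z j with hy
      have hyconv : ∑ j ∈ t', (w j / s') = 1 := by
        rw [← Finset.sum_div, ← hs', div_self (ne_of_gt hs'pos)]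
      have hyS : y ∈ convexHull ℝ S := by
        rw [hy]
        exact Convex.sum_mem (convex_convexHull ℝ S)
          (fun j hj => le_of_lt (div_pos (hpos j (Finset.mem_insert_of_mem hj)) hs'pos)) hyconv
          (fun j hj => subset_convexHull ℝ S (hS j (Finset.mem_insert_of_mem hj)))
      have hzi₀S : z i₀ ∈ convexHull ℝ S :=
        subset_convexHull ℝ S (hS i₀ (Finset.mem_insert_self _ _))
      have hdecomp : (∑ j ∈ insert i₀ t', w j • z j) = w i₀ • z i₀ + s' • y := by
        rw [Finset.sum_insert hi₀, hy, Finset.smul_sum]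
        congr 1
        refine Finset.sum_congr rfl (fun j hj => ?_)
        rw [smul_smul, mul_comm s', div_mul_cancel₀ _ (ne_of_gt hs'pos)]
      have hopen : (∑ j ∈ insert i₀ t', w j • z j) ∈ openSegment ℝ (z i₀) y := by
        rw [hdecomp]
        exact ⟨w i₀, s', hw0pos, hs'pos, hw0, rfl⟩
      obtain ⟨hz₀F, hyF⟩ := And.intro (hext.2 hzi₀S hyS hmem hopen)
        (hext.right_mem_of_mem_openSegment hzi₀S hyS hmem hopen)
      rcases Finset.mem_insert.mp hit with rfl | hit'
      · exact hz₀F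
      · exact IH (fun j => w j / s') z
          (fun j hj => div_pos (hpos j (Finset.mem_insert_of_mem hj)) hs'pos) hyconv
          (fun j hj => hS j (Finset.mem_insert_of_mem hj)) (by rw [← hy]; exact hyF) i hit'

lemma extreme_carrier_hull {E : Type*} [AddCommGroup E] [Module ℝ E] {S F : Set E}
    (hext : IsExtreme ℝ (convexHull ℝ S) F) : F ⊆ convexHull ℝ (S ∩ F) := by
  classical
  intro x hx
  have hxS : x ∈ convexHull ℝ S := hext.1 hx
  rw [convexHull_eq] at hxS
  obtain ⟨ι, t, w, z, hw0, hw1, hzS, hcm⟩ := hxS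
  set t' : Finset ι := t.filter (fun i => w i ≠ 0) with ht'
  have ht'sub : t' ⊆ t := Finset.filter_subset _ _
  have ht'sum : ∑ i ∈ t', w i = 1 := by
    rw [ht', Finset.sum_filter_ne_zero, hw1]
  have hxsum : x = ∑ i ∈ t', w i • z i := by
    rw [← hcm, Finset.centerMass_eq_of_sum_1 _ _ hw1]
    refine (Finset.sum_subset ht'sub (fun i hi hni => ?_)).symm
    have : w i = 0 := by
      by_contra hwi
      exact hni (Finset.mem_filter.mpr ⟨hi, hwi⟩)
    rw [this, zero_smul]
  have hpos : ∀ i ∈ t', 0 < w i := by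
    intro i hi
    rw [ht', Finset.mem_filter] at hi
    exact lt_of_le_of_ne (hw0 i hi.1) (Ne.symm hi.2)
  have hmemF : (∑ i ∈ t', w i • z i) ∈ F := by rwa [← hxsum]
  have hkey := key_carrier hext t' w z hpos ht'sum (fun i hi => hzS i (ht'sub hi)) hmemF
  rw [hxsum]
  exact Convex.sum_mem (convex_convexHull ℝ _) (fun i hi => le_of_lt (hpos i hi)) ht'sum
    (fun i hi => subset_convexHull ℝ _ ⟨hzS i (ht'sub hi), hkey i hi⟩)

end Aux

/-- every face of `ASM_n` is a 2-level polytope: for each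
facet-defining hyperplane `{ℓ = c}` of a face `F`, there is a parallel hyperplane
`{ℓ = c'}` containing all vertices of `F` not on the facet. -/
theorem faces_are_two_level (n : ℕ) (F : Set (Matrix (Fin n) (Fin n) ℝ))
    (hF : IsFaceOf F (ASMPolytope n))
    (ℓ : Matrix (Fin n) (Fin n) ℝ →ₗ[ℝ] ℝ) (c : ℝ)
    (hle : ∀ x ∈ F, ℓ x ≤ c)
    (hfacet : IsFacetOf (F ∩ {x | ℓ x = c}) F) :
    ∃ c' : ℝ, ∀ v ∈ Set.extremePoints ℝ F, ℓ v ≠ c → ℓ v = c' := by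
  classical
  rcases Nat.eq_zero_or_pos n with hn0 | hn0
  · subst hn0
    refine ⟨ℓ 0, fun v hv hne => ?_⟩
    have hv0 : v = 0 := by
      funext i
      exact i.elim0
    rw [hv0]
  by_cases hex : ∃ v ∈ Set.extremePoints ℝ F, ℓ v ≠ c
  swap
  · push_neg at hex
    exact ⟨0, fun v hv hne => absurd (hex v hv) hne⟩
  obtain ⟨A0, hA0ext, hA0ne⟩ := hex
  set G : Set (Matrix (Fin n) (Fin n) ℝ) := F ∩ {x | ℓ x = c} with hGdef
  have hGF : G ⊆ F := hfacet.1.1.1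
  have hFP : F ⊆ ASMPolytope n := hF.1.1
  have hGext : IsExtreme ℝ (ASMPolytope n) G := hF.1.trans hfacet.1.1
  have hGhull : G ⊆ convexHull ℝ ({A : Matrix (Fin n) (Fin n) ℝ | IsASM A} ∩ G) :=
    extreme_carrier_hull hGext
  have hSGfin : ({A : Matrix (Fin n) (Fin n) ℝ | IsASM A} ∩ G).Finite :=
    ASM_finite.subset Set.inter_subset_left
  set sg : Finset (Matrix (Fin n) (Fin n) ℝ) := hSGfin.toFinset with hsg
  have hsgG : ∀ A ∈ sg, A ∈ G ∧ IsASM A := by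
    intro A hA
    rw [hsg, Set.Finite.mem_toFinset] at hA
    exact ⟨hA.2, hA.1⟩
  have hsgne : sg.Nonempty := by
    obtain ⟨g0, hg0⟩ := hfacet.2.1
    rcases Set.eq_empty_or_nonempty ({A : Matrix (Fin n) (Fin n) ℝ | IsASM A} ∩ G) with he | he
    · exfalso
      have := hGhull hg0
      rw [he, convexHull_empty] at this
      exact this
    · rw [hsg, Set.Finite.toFinset_nonempty]
      exact he
  have hcardpos : (0 : ℝ) < (sg.card : ℝ) := by
    exact_mod_cast Finset.card_pos.mpr hsgne
  obtain ⟨mG, hmG⟩ : ∃ mG : Matrix (Fin n) (Fin n) ℝ,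
      mG = ((sg.card : ℝ))⁻¹ • ∑ A ∈ sg, A := ⟨_, rfl⟩
  have hmGG : mG ∈ G := by
    have hGconv : Convex ℝ G := hfacet.1.2
    have hexp : mG = ∑ A ∈ sg, ((sg.card : ℝ))⁻¹ • A := by
      rw [hmG, Finset.smul_sum]
    rw [hexp]
    refine hGconv.sum_mem (fun A _ => by positivity) ?_ (fun A hA => (hsgG A hA).1)
    rw [Finset.sum_const, nsmul_eq_mul, mul_inv_cancel₀ (ne_of_gt hcardpos)]
  have hℓG : ∀ g ∈ G, ℓ g = c := fun g hg => hg.2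
  have hℓmG : ℓ mG = c := hℓG mG hmGG
  have hvert : ∀ v ∈ Set.extremePoints ℝ F, IsASM v ∧ v ∈ F := by
    intro v hv
    have h1 : v ∈ Set.extremePoints ℝ (ASMPolytope n) :=
      hF.1.extremePoints_subset_extremePoints hv
    have hextsub : Set.extremePoints ℝ (convexHull ℝ {A : Matrix (Fin n) (Fin n) ℝ | IsASM A})
        ⊆ {A : Matrix (Fin n) (Fin n) ℝ | IsASM A} := extremePoints_convexHull_subset
    exact ⟨hextsub h1, hv.1⟩
  obtain ⟨hA0ASM, hA0F⟩ := hvert A0 hA0ext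
  have hmGQ : mG ∈ Qset n := by
    rw [← ASMPolytope_eq_Qset]
    exact hFP (hGF hmGG)
  have hA0Q : A0 ∈ Qset n := by
    rw [← ASMPolytope_eq_Qset]
    exact hFP hA0F
  obtain ⟨d, hd⟩ : ∃ d : Matrix (Fin n) (Fin n) ℝ, d = A0 - mG := ⟨_, rfl⟩
  have hℓd : ℓ d ≠ 0 := by
    rw [hd, map_sub, hℓmG]
    intro h
    apply hA0ne
    linarith
  have hfEd : ∀ e : Etype n, fE e d = fE e A0 - fE e mG := fun e => by
    rw [hd]
    exact map_sub (fEL e) _ _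
  have hfEmG : ∀ e : Etype n, fE e mG = ((sg.card : ℝ))⁻¹ * ∑ A ∈ sg, fE e A := by
    intro e
    rw [hmG, fE_smul]
    congr 1
    exact map_sum (fEL e) _ _
  have hdrow : ∀ i, ∑ j, d i j = 0 := by
    intro i
    rw [hd]
    simp only [Matrix.sub_apply, Finset.sum_sub_distrib]
    rw [hA0Q.2.1 i, hmGQ.2.1 i, sub_self]
  have hdcol : ∀ j, ∑ i, d i j = 0 := by
    intro j
    rw [hd]
    simp only [Matrix.sub_apply, Finset.sum_sub_distrib]
    rw [hA0Q.2.2 j, hmGQ.2.2 j, sub_self]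
  -- THE CLAIM: some constraint is constant on the ASMs of G but not on those of F
  have hclaim : ∃ e : Etype n, (∀ A ∈ sg, ∀ B ∈ sg, fE e A = fE e B) ∧
      ∃ A, (IsASM A ∧ A ∈ F) ∧ ∃ B, (IsASM B ∧ B ∈ F) ∧ fE e A ≠ fE e B := by
    by_contra hno
    push_neg at hno
    obtain ⟨A1, hA1sg⟩ := id hsgne
    have hA1 := hsgG A1 hA1sg
    have hconstd : ∀ e : Etype n, (∀ A ∈ sg, ∀ B ∈ sg, fE e A = fE e B) → fE e d = 0 := by
      intro e hconst
      have hA0eq : fE e A0 = fE e A1 :=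
        hno e hconst A0 ⟨hA0ASM, hA0F⟩ A1 ⟨hA1.2, hGF hA1.1⟩
      have hmGeq : fE e mG = fE e A1 := by
        rw [hfEmG, Finset.sum_congr rfl (fun A hA => hconst A hA A1 hA1sg),
          Finset.sum_const, nsmul_eq_mul, ← mul_assoc,
          inv_mul_cancel₀ (ne_of_gt hcardpos), one_mul]
      rw [hfEd, hA0eq, hmGeq, sub_self]
    set NC : Finset (Etype n) :=
      Finset.univ.filter (fun e : Etype n => ¬ (∀ A ∈ sg, ∀ B ∈ sg, fE e A = fE e B)) with hNC
    rcases Finset.eq_empty_or_nonempty NC with hNCe | hNCne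
    · have hall : ∀ e : Etype n, fE e d = 0 := by
        intro e
        apply hconstd
        by_contra hc
        have : e ∈ NC := by
          rw [hNC]
          simp only [Finset.mem_filter, Finset.mem_univ, true_and]
          exact hc
        rw [hNCe] at this
        exact absurd this (Finset.notMem_empty e)
      have hd0 : d = 0 := eq_zero_of_rowPartial d (fun i j => hall (Sum.inl (i, j)))
      rw [hd0, map_zero] at hℓd
      exact hℓd rfl
    have hmGfr : ∀ e ∈ NC, 0 < fE e mG ∧ fE e mG < 1 := by
      intro e he
      rw [hNC, Finset.mem_filter] at he
      have hnc := he.2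
      push_neg at hnc
      obtain ⟨A, hA, B, hB, hAB⟩ := hnc
      have hvals : ∀ C ∈ sg, fE e C = 0 ∨ fE e C = 1 :=
        fun C hC => mem01.mp (fE_mem_ASM (hsgG C hC).2 e)
      have hnonneg : ∀ C ∈ sg, (0:ℝ) ≤ fE e C := by
        intro C hC
        rcases hvals C hC with h | h <;> rw [h] <;> norm_num
      have hle1 : ∀ C ∈ sg, fE e C ≤ 1 := by
        intro C hC
        rcases hvals C hC with h | h <;> rw [h] <;> norm_num
      obtain ⟨C1, hC1sg, hC1, C0, hC0sg, hC0⟩ :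
          ∃ C1 ∈ sg, fE e C1 = 1 ∧ ∃ C0 ∈ sg, fE e C0 = 0 := by
        rcases hvals A hA with h | h <;> rcases hvals B hB with h' | h'
        · exact absurd (h.trans h'.symm) hAB
        · exact ⟨B, hB, h', A, hA, h⟩
        · exact ⟨A, hA, h, B, hB, h'⟩
        · exact absurd (h.trans h'.symm) hAB
      constructor
      · rw [hfEmG]
        have hsum : (1:ℝ) ≤ ∑ C ∈ sg, fE e C := by
          calc (1:ℝ) = fE e C1 := hC1.symm
          _ ≤ ∑ C ∈ sg, fE e C := Finset.single_le_sum hnonneg hC1sg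
        exact mul_pos (inv_pos.mpr hcardpos) (lt_of_lt_of_le zero_lt_one hsum)
      · rw [hfEmG]
        have hsum : ∑ C ∈ sg, fE e C ≤ (sg.card : ℝ) - 1 := by
          have herase : ∑ C ∈ sg, fE e C = ∑ C ∈ sg.erase C0, fE e C := by
            rw [← Finset.add_sum_erase sg _ hC0sg, hC0, zero_add]
          rw [herase]
          calc ∑ C ∈ sg.erase C0, fE e C ≤ ∑ _C ∈ sg.erase C0, (1:ℝ) :=
            Finset.sum_le_sum (fun C hC => hle1 C (Finset.mem_of_mem_erase hC))
          _ = ((sg.erase C0).card : ℝ) := by rw [Finset.sum_const, nsmul_eq_mul, mul_one]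
          _ = (sg.card : ℝ) - 1 := by
              rw [Finset.card_erase_of_mem hC0sg,
                Nat.cast_sub (Finset.card_pos.mpr hsgne)]
              norm_num
        have hlt : ∑ C ∈ sg, fE e C < (sg.card : ℝ) := by linarith
        calc ((sg.card : ℝ))⁻¹ * ∑ C ∈ sg, fE e C
            < ((sg.card : ℝ))⁻¹ * (sg.card : ℝ) :=
          mul_lt_mul_of_pos_left hlt (inv_pos.mpr hcardpos)
        _ = 1 := inv_mul_cancel₀ (ne_of_gt hcardpos)
    set ε := NC.inf' hNCne (fun e => min (fE e mG) (1 - fE e mG) / (1 + |fE e d|)) with hε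
    have hεpos : 0 < ε := by
      rw [hε]
      refine (Finset.lt_inf'_iff hNCne).mpr (fun e he => ?_)
      have hfr := hmGfr e he
      exact div_pos (lt_min hfr.1 (by linarith)) (by positivity)
    have hmem : ∀ s : ℝ, |s| ≤ ε → mG + s • d ∈ Qset n := by
      intro s hs
      refine ⟨fun e => ?_, fun i => ?_, fun j => ?_⟩
      · rw [fE_add, fE_smul]
        by_cases hcst : (∀ A ∈ sg, ∀ B ∈ sg, fE e A = fE e B)
        · rw [hconstd e hcst, mul_zero, add_zero]
          exact hmGQ.1 e
        · have heNC : e ∈ NC := by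
            rw [hNC]
            simp only [Finset.mem_filter, Finset.mem_univ, true_and]
            exact hcst
          have hfr := hmGfr e heNC
          have hεe : ε ≤ min (fE e mG) (1 - fE e mG) / (1 + |fE e d|) := by
            rw [hε]
            exact Finset.inf'_le _ heNC
          have habs : (0:ℝ) ≤ |fE e d| := abs_nonneg _
          have hmin0 : (0:ℝ) ≤ min (fE e mG) (1 - fE e mG) := le_min (le_of_lt hfr.1) (by linarith)
          have hb : |s * fE e d| ≤ min (fE e mG) (1 - fE e mG) := by
            rw [abs_mul]
            calc |s| * |fE e d| ≤ ε * |fE e d| := mul_le_mul_of_nonneg_right hs habs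
            _ ≤ (min (fE e mG) (1 - fE e mG) / (1 + |fE e d|)) * |fE e d| :=
              mul_le_mul_of_nonneg_right hεe habs
            _ = min (fE e mG) (1 - fE e mG) * (|fE e d| / (1 + |fE e d|)) := by ring
            _ ≤ min (fE e mG) (1 - fE e mG) * 1 := by
              refine mul_le_mul_of_nonneg_left ?_ hmin0
              rw [div_le_one (by positivity)]
              linarith
            _ = min (fE e mG) (1 - fE e mG) := mul_one _
          have h1 := abs_le.mp hb
          have hminl := min_le_left (fE e mG) (1 - fE e mG)
          have hminr := min_le_right (fE e mG) (1 - fE e mG)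
          constructor
          · linarith [h1.1]
          · linarith [h1.2]
      · simp only [Matrix.add_apply, Matrix.smul_apply, smul_eq_mul, Finset.sum_add_distrib,
          ← Finset.mul_sum]
        rw [hmGQ.2.1 i, hdrow i, mul_zero, add_zero]
      · simp only [Matrix.add_apply, Matrix.smul_apply, smul_eq_mul, Finset.sum_add_distrib,
          ← Finset.mul_sum]
        rw [hmGQ.2.2 j, hdcol j, mul_zero, add_zero]
    have hy1 : mG + ε • d ∈ ASMPolytope n := by
      rw [ASMPolytope_eq_Qset]
      exact hmem ε (le_of_eq (abs_of_pos hεpos))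
    have hy2 : mG + (-ε) • d ∈ ASMPolytope n := by
      rw [ASMPolytope_eq_Qset]
      refine hmem (-ε) ?_
      rw [abs_neg, abs_of_pos hεpos]
    have hseg : mG ∈ openSegment ℝ (mG + (-ε) • d) (mG + ε • d) :=
      ⟨1/2, 1/2, by norm_num, by norm_num, by norm_num, by module⟩
    have hboth := hGext.2 hy2 hy1 hmGG hseg
    have hc2 : ℓ (mG + ε • d) = c := (hGext.right_mem_of_mem_openSegment hy2 hy1 hmGG hseg).2
    rw [map_add, map_smul, hℓmG, smul_eq_mul] at hc2
    have hprod : ε * ℓ d = 0 := by linarith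
    rcases mul_eq_zero.mp hprod with h | h
    · exact absurd h (ne_of_gt hεpos)
    · exact hℓd h
  -- use the claim
  obtain ⟨e, hconst, A', ⟨hA'ASM, hA'F⟩, B', ⟨hB'ASM, hB'F⟩, hAB⟩ := hclaim
  obtain ⟨A1, hA1sg⟩ := id hsgne
  set b := fE e A1 with hbdef
  have hbval : b = 0 ∨ b = 1 := mem01.mp (fE_mem_ASM (hsgG A1 hA1sg).2 e)
  have hbG : ∀ g ∈ G, fE e g = b := by
    intro g hg
    have hsub : ({A : Matrix (Fin n) (Fin n) ℝ | IsASM A} ∩ G) ⊆ {z | fE e z = b} := by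
      intro A hA
      have hAsg : A ∈ sg := by
        rw [hsg, Set.Finite.mem_toFinset]
        exact hA
      exact hconst A hAsg A1 hA1sg
    have hcvx : Convex ℝ {z : Matrix (Fin n) (Fin n) ℝ | fE e z = b} :=
      convex_hyperplane ⟨fE_add e, fE_smul e⟩ b
    exact convexHull_min hsub hcvx (hGhull hg)
  have hℓW0 : vectorSpan ℝ G ≤ LinearMap.ker ℓ := by
    rw [vectorSpan_def, Submodule.span_le]
    rintro z ⟨g1, hg1, g2, hg2, rfl⟩
    simp only [SetLike.mem_coe, LinearMap.mem_ker]
    show ℓ (g1 - g2) = 0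
    rw [map_sub, hℓG g1 hg1, hℓG g2 hg2, sub_self]
  have hfEW0 : vectorSpan ℝ G ≤ LinearMap.ker (fEL e) := by
    rw [vectorSpan_def, Submodule.span_le]
    rintro z ⟨g1, hg1, g2, hg2, rfl⟩
    simp only [SetLike.mem_coe, LinearMap.mem_ker]
    show fE e (g1 - g2) = 0
    rw [show fE e (g1 - g2) = fE e g1 - fE e g2 from map_sub (fEL e) _ _,
      hbG g1 hg1, hbG g2 hg2, sub_self]
  have hmGF : mG ∈ F := hGF hmGG
  have hspan : ∀ u : Matrix (Fin n) (Fin n) ℝ, u ∈ F → ℓ u ≠ c →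
      vectorSpan ℝ G ⊔ Submodule.span ℝ {u - mG} = vectorSpan ℝ F := by
    intro u huF hune
    have huW : u - mG ∈ vectorSpan ℝ F := vsub_mem_vectorSpan ℝ huF hmGF
    have hunW0 : u - mG ∉ vectorSpan ℝ G := by
      intro hmem
      have h0 := hℓW0 hmem
      rw [LinearMap.mem_ker, map_sub, hℓmG] at h0
      apply hune
      linarith
    apply Submodule.eq_of_le_of_finrank_le
    · exact sup_le (vectorSpan_mono ℝ hGF)
        (Submodule.span_le.mpr (Set.singleton_subset_iff.mpr huW))
    · have hlt : vectorSpan ℝ G < vectorSpan ℝ G ⊔ Submodule.span ℝ {u - mG} := by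
        refine lt_of_le_of_ne le_sup_left (fun heq => hunW0 ?_)
        rw [heq]
        exact Submodule.mem_sup_right (Submodule.mem_span_singleton_self _)
      have h1 := Submodule.finrank_lt_finrank_of_lt hlt
      have h2 := hfacet.2.2
      omega
  have hoff : ∀ v, IsASM v → v ∈ F → ℓ v ≠ c → fE e v = 1 - b := by
    intro v hvASM hvF hvne
    have hvneb : fE e v ≠ b := by
      intro heq
      have hker : vectorSpan ℝ F ≤ LinearMap.ker (fEL e) := by
        rw [← hspan v hvF hvne]
        refine sup_le hfEW0 ?_
        rw [Submodule.span_le, Set.singleton_subset_iff]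
        simp only [SetLike.mem_coe, LinearMap.mem_ker]
        show fE e (v - mG) = 0
        rw [show fE e (v - mG) = fE e v - fE e mG from map_sub (fEL e) _ _, heq,
          hbG mG hmGG, sub_self]
      have hABmem : A' - B' ∈ vectorSpan ℝ F := vsub_mem_vectorSpan ℝ hA'F hB'F
      have h0 := hker hABmem
      rw [LinearMap.mem_ker] at h0
      have h1 : fE e (A' - B') = 0 := h0
      rw [show fE e (A' - B') = fE e A' - fE e B' from map_sub (fEL e) _ _] at h1
      exact hAB (by linarith)
    rcases hbval with hb' | hb'
    · rcases mem01.mp (fE_mem_ASM hvASM e) with hv' | hv'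
      · exact absurd (hv'.trans hb'.symm) hvneb
      · rw [hv', hb']
        norm_num
    · rcases mem01.mp (fE_mem_ASM hvASM e) with hv' | hv'
      · rw [hv', hb']
        norm_num
      · exact absurd (hv'.trans hb'.symm) hvneb
  have hA0val : fE e A0 = 1 - b := hoff A0 hA0ASM hA0F hA0ne
  refine ⟨ℓ A0, fun v hvext hvne => ?_⟩
  obtain ⟨hvASM, hvF⟩ := hvert v hvext
  have hvval : fE e v = 1 - b := hoff v hvASM hvF hvne
  have hvA0 : v - A0 ∈ vectorSpan ℝ F := vsub_mem_vectorSpan ℝ hvF hA0F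
  rw [← hspan A0 hA0F hA0ne] at hvA0
  obtain ⟨w0, hw0, z, hz, hsum⟩ := Submodule.mem_sup.mp hvA0
  obtain ⟨t, rfl⟩ := Submodule.mem_span_singleton.mp hz
  have hfE0 : fE e (v - A0) = 0 := by
    rw [show fE e (v - A0) = fE e v - fE e A0 from map_sub (fEL e) _ _, hvval, hA0val, sub_self]
  have hfEw0 : fE e w0 = 0 := by
    have := hfEW0 hw0
    rwa [LinearMap.mem_ker] at this
  have hfEu : fE e (A0 - mG) = (1 - b) - b := by
    rw [show fE e (A0 - mG) = fE e A0 - fE e mG from map_sub (fEL e) _ _, hA0val, hbG mG hmGG]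
  have ht0 : t = 0 := by
    have hexp : fE e (v - A0) = fE e w0 + t * fE e (A0 - mG) := by
      rw [← hsum, fE_add, fE_smul]
    rw [hfE0, hfEw0, hfEu, zero_add] at hexp
    have hbne : (1 - b) - b ≠ 0 := by
      rcases hbval with h | h <;> rw [h] <;> norm_num
    rcases mul_eq_zero.mp hexp.symm with h | h
    · exact h
    · exact absurd h hbne
  have hvw : v - A0 = w0 := by
    rw [← hsum, ht0, zero_smul, add_zero]
  have hker := hℓW0 hw0
  rw [LinearMap.mem_ker] at hker
  have hfin : ℓ (v - A0) = 0 := by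
    rw [hvw]
    exact hker
  rw [map_sub] at hfin
  linarith

end ASMPaper
end

section
/- A d-dimensional face of ASM_n has at most 2^d vertices. -/
open scoped BigOperators
open scoped Classical

namespace ASMPaper

variable {n : ℕ}

/-- Auxiliary: at most `2^d` zero-one vectors in an affine flat of dimension `≤ d`. -/
lemma cube_ncard_aux {ι : Type*} [Fintype ι] (d : ℕ) (S : Set (ι → ℝ))
    (hS : ∀ f ∈ S, ∀ i, f i = 0 ∨ f i = 1)
    (hd : Module.finrank ℝ (vectorSpan ℝ S) ≤ d) : S.ncard ≤ 2 ^ d := by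
  induction d generalizing S with
  | zero =>
    have hsub : S.Subsingleton := by
      intro x hx y hy
      have h0 : vectorSpan ℝ S = ⊥ := by
        rwa [Nat.le_zero, Submodule.finrank_eq_zero] at hd
      have := vsub_mem_vectorSpan ℝ hx hy
      rw [h0, Submodule.mem_bot, vsub_eq_sub, sub_eq_zero] at this
      exact this
    rcases hsub.eq_empty_or_singleton with h | ⟨a, h⟩ <;> simp [h]
  | succ d ih =>
    by_cases hconst : ∀ i : ι, ∀ x ∈ S, ∀ y ∈ S, x i = y i
    · have hsub : S.Subsingleton := fun x hx y hy => funext fun i => hconst i x hx y hy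
      have h1 : S.ncard ≤ 1 := by
        rcases hsub.eq_empty_or_singleton with h | ⟨a, h⟩ <;> simp [h]
      exact le_trans h1 Nat.one_le_two_pow
    · push_neg at hconst
      obtain ⟨i, x, hx, y, hy, hxy⟩ := hconst
      set S0 : Set (ι → ℝ) := {z ∈ S | z i = x i} with hS0
      set S1 : Set (ι → ℝ) := {z ∈ S | z i ≠ x i} with hS1
      have hunion : S = S0 ∪ S1 := by
        ext z; by_cases h : z i = x i <;> simp [hS0, hS1, h]
      have key : ∀ T : Set (ι → ℝ), T ⊆ S → (∀ a ∈ T, ∀ b ∈ T, a i = b i) →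
          Module.finrank ℝ (vectorSpan ℝ T) ≤ d := by
        intro T hTS hTc
        have h1 : vectorSpan ℝ T ≤ vectorSpan ℝ S ⊓
            LinearMap.ker (LinearMap.proj (R := ℝ) (φ := fun _ : ι => ℝ) i) := by
          refine le_inf (vectorSpan_mono ℝ hTS) ?_
          rw [vectorSpan_def, Submodule.span_le]
          rintro v hv
          rw [Set.mem_vsub] at hv
          obtain ⟨a, ha, b, hb, rfl⟩ := hv
          simp only [SetLike.mem_coe, LinearMap.mem_ker, LinearMap.proj_apply]
          show (a - b) i = 0
          simp [hTc a ha b hb]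
        have h2 : vectorSpan ℝ S ⊓
            LinearMap.ker (LinearMap.proj (R := ℝ) (φ := fun _ : ι => ℝ) i) < vectorSpan ℝ S := by
          refine lt_of_le_of_ne inf_le_left ?_
          intro heq
          have hxv : x - y ∈ vectorSpan ℝ S := by
            simpa [vsub_eq_sub] using vsub_mem_vectorSpan ℝ hx hy
          rw [← heq] at hxv
          have h3 := hxv.2
          have : (x - y) i = 0 := h3
          simp only [Pi.sub_apply, sub_eq_zero] at this
          exact hxy this
        have hlt : Module.finrank ℝ (vectorSpan ℝ T) < d + 1 :=
          lt_of_le_of_lt (Submodule.finrank_mono h1)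
            (lt_of_lt_of_le (Submodule.finrank_lt_finrank_of_lt h2) hd)
        omega
      have c0 : ∀ a ∈ S0, ∀ b ∈ S0, a i = b i := by
        rintro a ⟨-, ha⟩ b ⟨-, hb⟩; rw [ha, hb]
      have c1 : ∀ a ∈ S1, ∀ b ∈ S1, a i = b i := by
        rintro a ⟨haS, ha⟩ b ⟨hbS, hb⟩
        rcases hS a haS i with h | h <;> rcases hS b hbS i with h' | h' <;>
          rw [h, h'] <;> exfalso <;>
            rcases hS x hx i with h'' | h'' <;> simp [h, h', h''] at ha hb
      have b0 := ih S0 (fun f hf => hS f (Set.sep_subset _ _ hf)) (key S0 (Set.sep_subset _ _) c0)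
      have b1 := ih S1 (fun f hf => hS f (Set.sep_subset _ _ hf)) (key S1 (Set.sep_subset _ _) c1)
      calc S.ncard = (S0 ∪ S1).ncard := by rw [← hunion]
        _ ≤ S0.ncard + S1.ncard := Set.ncard_union_le _ _
        _ ≤ 2 ^ d + 2 ^ d := Nat.add_le_add b0 b1
        _ = 2 ^ (d + 1) := by ring

/-- The partial-row-sum map, as a linear map. -/
noncomputable def cornerMap (n : ℕ) :
    Matrix (Fin n) (Fin n) ℝ →ₗ[ℝ] (Fin n × Fin n → ℝ) where
  toFun A := fun p => rowPartial A p.1 p.2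
  map_add' A B := by
    funext p
    simp [rowPartial, Matrix.add_apply, Finset.sum_add_distrib]
  map_smul' c A := by
    funext p
    simp [rowPartial, Matrix.smul_apply, Finset.mul_sum]

lemma rowPartial_split (A : Matrix (Fin n) (Fin n) ℝ) (i j : Fin n) :
    rowPartial A i j = A i j + ∑ j' ∈ Finset.univ.filter (fun j' : Fin n => j' < j), A i j' := by
  have hfil : Finset.univ.filter (fun j' : Fin n => j' ≤ j) =
      insert j (Finset.univ.filter (fun j' : Fin n => j' < j)) := by
    ext j'
    simp [le_iff_lt_or_eq, or_comm]
  rw [rowPartial, hfil, Finset.sum_insert (by simp)]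

lemma cornerMap_injective (n : ℕ) : Function.Injective (cornerMap n) := by
  intro A B hAB
  have h : ∀ i j, rowPartial A i j = rowPartial B i j := fun i j =>
    congrFun hAB (i, j)
  ext i j
  have main : ∀ m : ℕ, ∀ j : Fin n, (j : ℕ) = m → A i j = B i j := by
    intro m
    induction m using Nat.strong_induction_on with
    | _ m ih =>
      intro j hj
      have hA := rowPartial_split A i j
      have hB := rowPartial_split B i j
      have hsum : ∑ j' ∈ Finset.univ.filter (fun j' : Fin n => j' < j), A i j' =
          ∑ j' ∈ Finset.univ.filter (fun j' : Fin n => j' < j), B i j' := by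
        refine Finset.sum_congr rfl ?_
        intro j' hj'
        have hj2 : j' < j := (Finset.mem_filter.mp hj').2
        have hlt : (j' : ℕ) < m := by rw [← hj]; exact hj2
        exact ih (j' : ℕ) hlt j' rfl
      have := h i j
      rw [hA, hB, hsum] at this
      linarith
  exact main (j : ℕ) j rfl

/-- a `d`-dimensional face of `ASM_n` has at most `2^d` vertices. -/
theorem vertex_bound (n : ℕ) (F : Set (Matrix (Fin n) (Fin n) ℝ))
    (hF : IsFaceOf F (ASMPolytope n)) (d : ℕ)
    (hd : Module.finrank ℝ (vectorSpan ℝ F) = d) :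
    (Set.extremePoints ℝ F).ncard ≤ 2 ^ d := by
  classical
  set S := Set.extremePoints ℝ F with hSdef
  have hSasm : ∀ A ∈ S, IsASM A := by
    intro A hA
    have h1 : A ∈ Set.extremePoints ℝ (ASMPolytope n) :=
      hF.1.extremePoints_subset_extremePoints hA
    rw [ASMPolytope] at h1
    have h2 : A ∈ {B : Matrix (Fin n) (Fin n) ℝ | IsASM B} :=
      extremePoints_convexHull_subset h1
    exact h2
  have hSF : S ⊆ F := extremePoints_subset
  have hinj : Function.Injective (cornerMap n) := cornerMap_injective n
  have hcard : S.ncard = ((cornerMap n) '' S).ncard :=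
    (Set.ncard_image_of_injective S hinj).symm
  rw [hcard]
  refine cube_ncard_aux d _ ?_ ?_
  · rintro f ⟨A, hA, rfl⟩ p
    exact (hSasm A hA).2.1 p.1 p.2
  · have hv : vectorSpan ℝ ((cornerMap n) '' S) =
        Submodule.map (cornerMap n) (vectorSpan ℝ S) := by
      have := AffineMap.vectorSpan_image_eq_submodule_map
        (f := (cornerMap n).toAffineMap) (k := ℝ) (s := S)
      simpa using this.symm
    rw [hv]
    calc Module.finrank ℝ (Submodule.map (cornerMap n) (vectorSpan ℝ S))
        ≤ Module.finrank ℝ (vectorSpan ℝ S) := Submodule.finrank_map_le _ _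
      _ ≤ Module.finrank ℝ (vectorSpan ℝ F) :=
          Submodule.finrank_mono (vectorSpan_mono ℝ hSF)
      _ = d := hd
end ASMPaper
end
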